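/- arXiv:2305.15300 — 7 statements merged into one kernel-verified Lean document; each statement's English description precedes it below -/
import Mathlib

section
/- Let V be an n-dimensional complex vector space, n ≥ 1, equipped with a Hermitian inner product H, and let p ∈ [1,∞). For a self-adjoint endomorphism h of (V,H) with eigenvalues λ₁,…,λ_n (counted with multiplicity), set ‖h‖_p^H := ((1/n)·Σ_{i=1}^n |λ_i|^p)^{1/p}. Then ‖·‖_p^H satisfies the triangle inequality: for any self-adjoint endomorphisms h₁, h₂ of (V,H), ‖h₁ + h₂‖_p^H ≤ ‖h₁‖_p^H + ‖h₂‖_p^H. -/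
open scoped BigOperators

noncomputable section

open Complex in
/-- Parseval: for an orthonormal basis `b` of a complex inner product space,
`∑ i, ‖⟪b i, x⟫‖² = ‖x‖²`. -/
lemma parseval_aux {V : Type*} [NormedAddCommGroup V] [InnerProductSpace ℂ V]
    {ι : Type*} [Fintype ι] (b : OrthonormalBasis ι ℂ V) (x : V) :
    ∑ i, ‖(inner ℂ (b i) x : ℂ)‖ ^ 2 = ‖x‖ ^ 2 := by
  have h := b.sum_inner_mul_inner x x
  have h2 : ∀ i, (inner ℂ x (b i) : ℂ) * inner ℂ (b i) x = ((‖(inner ℂ (b i) x : ℂ)‖ : ℂ) ^ 2) := by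
    intro i
    rw [← inner_conj_symm x (b i), RCLike.conj_mul]
    norm_cast
  simp_rw [h2, inner_self_eq_norm_sq_to_K] at h
  exact_mod_cast congrArg Complex.re h

open Complex in
/-- Key lemma: for a symmetric endomorphism `h` and ANY orthonormal basis `e`,
the `p`-sum of the diagonal entries `re ⟪e i, h (e i)⟫` is at most the `p`-sum of
the eigenvalues of `h`. -/
lemma diag_pSum_le {V : Type*} [NormedAddCommGroup V] [InnerProductSpace ℂ V]
    [FiniteDimensional ℂ V] {n : ℕ} (hdim : Module.finrank ℂ V = n) {h : V →ₗ[ℂ] V}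
    (hh : h.IsSymmetric) {p : ℝ} (hp1 : 1 ≤ p) (e : OrthonormalBasis (Fin n) ℂ V) :
    ∑ i : Fin n, |((inner ℂ (e i) (h (e i)) : ℂ)).re| ^ p
      ≤ ∑ j : Fin n, |hh.eigenvalues hdim j| ^ p := by
  set f := hh.eigenvectorBasis hdim with hf
  set μ := hh.eigenvalues hdim with hμ
  -- the "doubly stochastic" weights
  set d : Fin n → Fin n → ℝ := fun i j => ‖(inner ℂ (f j) (e i) : ℂ)‖ ^ 2 with hd
  have hd0 : ∀ i j, 0 ≤ d i j := fun i j => by positivity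
  have hrow : ∀ i, ∑ j, d i j = 1 := by
    intro i
    have := parseval_aux f (e i)
    rwa [e.orthonormal.1 i, one_pow] at this
  have hcol : ∀ j, ∑ i, d i j = 1 := by
    intro j
    have h1 : ∀ i, d i j = ‖(inner ℂ (e i) (f j) : ℂ)‖ ^ 2 := by
      intro i
      show ‖(inner ℂ (f j) (e i) : ℂ)‖ ^ 2 = ‖(inner ℂ (e i) (f j) : ℂ)‖ ^ 2
      rw [← inner_conj_symm (f j) (e i), RCLike.norm_conj]
    simp_rw [h1]
    have := parseval_aux e (f j)
    rwa [f.orthonormal.1 j, one_pow] at this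
  -- diagonal entries as convex combinations of eigenvalues
  have hdiag : ∀ i, ((inner ℂ (e i) (h (e i)) : ℂ)).re = ∑ j, d i j * μ j := by
    intro i
    have h1 : (inner ℂ (e i) (h (e i)) : ℂ) = ∑ j, (μ j : ℂ) * ((‖(inner ℂ (f j) (e i) : ℂ)‖ : ℂ) ^ 2) := by
      rw [← f.sum_inner_mul_inner (e i) (h (e i))]
      refine Finset.sum_congr rfl fun j _ => ?_
      have h2 : (inner ℂ (f j) (h (e i)) : ℂ) = (μ j : ℂ) * inner ℂ (f j) (e i) := by
        have := hh.eigenvectorBasis_apply_self_apply hdim (e i) j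
        simpa [OrthonormalBasis.repr_apply_apply] using this
      rw [h2, ← inner_conj_symm (e i) (f j), mul_left_comm, RCLike.conj_mul]
      norm_cast
      exact (RCLike.ofReal_mul _ _).symm
    rw [h1, Complex.re_sum]
    refine Finset.sum_congr rfl fun j _ => ?_
    rw [show ((μ j : ℂ) * ((‖(inner ℂ (f j) (e i) : ℂ)‖ : ℂ) ^ 2))
        = ((μ j * ‖(inner ℂ (f j) (e i) : ℂ)‖ ^ 2 : ℝ) : ℂ) by push_cast; ring,
      Complex.ofReal_re]
    show _ = d i j * μ j
    rw [hd, mul_comm]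
  -- pointwise bound via power mean inequality
  have hpt : ∀ i, |((inner ℂ (e i) (h (e i)) : ℂ)).re| ^ p ≤ ∑ j, d i j * |μ j| ^ p := by
    intro i
    have habs : |((inner ℂ (e i) (h (e i)) : ℂ)).re| ≤ ∑ j, d i j * |μ j| := by
      rw [hdiag i]
      refine (Finset.abs_sum_le_sum_abs _ _).trans ?_
      refine Finset.sum_le_sum fun j _ => ?_
      rw [abs_mul, _root_.abs_of_nonneg (hd0 i j)]
    have h2 : |((inner ℂ (e i) (h (e i)) : ℂ)).re| ^ p ≤ (∑ j, d i j * |μ j|) ^ p :=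
      Real.rpow_le_rpow (abs_nonneg _) habs (le_trans zero_le_one hp1)
    refine h2.trans ?_
    exact Real.rpow_arith_mean_le_arith_mean_rpow Finset.univ (d i) (fun j => |μ j|)
      (fun j _ => hd0 i j) (hrow i) (fun j _ => abs_nonneg _) hp1
  calc ∑ i : Fin n, |((inner ℂ (e i) (h (e i)) : ℂ)).re| ^ p
      ≤ ∑ i, ∑ j, d i j * |μ j| ^ p := Finset.sum_le_sum fun i _ => hpt i
    _ = ∑ j, (∑ i, d i j) * |μ j| ^ p := by
        rw [Finset.sum_comm]; simp_rw [Finset.sum_mul]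
    _ = ∑ j, |μ j| ^ p := by simp_rw [hcol]; simp

/-- `‖h‖_p^H := ((1/n)·Σᵢ |λᵢ|^p)^{1/p}` for a self-adjoint (symmetric) endomorphism `h` of an
`n`-dimensional complex inner product space, where `λ₁,…,λₙ` are the eigenvalues of `h`
counted with multiplicity. -/
def symPNorm {V : Type*} [NormedAddCommGroup V] [InnerProductSpace ℂ V] [FiniteDimensional ℂ V]
    {n : ℕ} (hdim : Module.finrank ℂ V = n) {h : V →ₗ[ℂ] V}
    (hh : h.IsSymmetric) (p : ℝ) : ℝ :=
  ((∑ i : Fin n, |hh.eigenvalues hdim i| ^ p) / n) ^ (1 / p)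

/-- for `p ∈ [1,∞)`, `‖·‖_p^H` satisfies the triangle inequality on self-adjoint
endomorphisms of an `n`-dimensional complex inner product space (`n ≥ 1`). -/
theorem pNorm_triangle_of_selfAdjoint {V : Type*} [NormedAddCommGroup V]
    [InnerProductSpace ℂ V] [FiniteDimensional ℂ V] {n : ℕ} (hn : 1 ≤ n)
    (hdim : Module.finrank ℂ V = n) (p : ℝ) (hp1 : 1 ≤ p)
    (h₁ h₂ : V →ₗ[ℂ] V) (hh₁ : h₁.IsSymmetric) (hh₂ : h₂.IsSymmetric) :
    symPNorm hdim (hh₁.add hh₂) p ≤ symPNorm hdim hh₁ p + symPNorm hdim hh₂ p := by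
  have hp0 : 0 < p := lt_of_lt_of_le zero_lt_one hp1
  set f := (hh₁.add hh₂).eigenvectorBasis hdim with hf
  set μ := (hh₁.add hh₂).eigenvalues hdim with hμ
  set a : Fin n → ℝ := fun i => ((inner ℂ (f i) (h₁ (f i)) : ℂ)).re with ha
  set b : Fin n → ℝ := fun i => ((inner ℂ (f i) (h₂ (f i)) : ℂ)).re with hb
  -- each eigenvalue of h₁ + h₂ is a i + b i
  have hsum : ∀ i, μ i = a i + b i := by
    intro i
    have h1 : (h₁ + h₂) (f i) = (μ i : ℂ) • f i :=
      (hh₁.add hh₂).apply_eigenvectorBasis hdim i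
    have h2 : (inner ℂ (f i) ((h₁ + h₂) (f i)) : ℂ) = (μ i : ℂ) := by
      rw [h1, inner_smul_right, inner_self_eq_norm_sq_to_K, f.orthonormal.1 i]
      norm_num
    have h3 : (inner ℂ (f i) ((h₁ + h₂) (f i)) : ℂ)
        = inner ℂ (f i) (h₁ (f i)) + inner ℂ (f i) (h₂ (f i)) := by
      simp [inner_add_right]
    rw [h3] at h2
    have := congrArg Complex.re h2
    simpa [ha, hb] using this.symm
  have key1 : ∑ i : Fin n, |a i| ^ p ≤ ∑ j : Fin n, |hh₁.eigenvalues hdim j| ^ p :=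
    diag_pSum_le hdim hh₁ hp1 f
  have key2 : ∑ i : Fin n, |b i| ^ p ≤ ∑ j : Fin n, |hh₂.eigenvalues hdim j| ^ p :=
    diag_pSum_le hdim hh₂ hp1 f
  have minkowski : (∑ i : Fin n, |a i + b i| ^ p) ^ (1 / p)
      ≤ (∑ i : Fin n, |a i| ^ p) ^ (1 / p) + (∑ i : Fin n, |b i| ^ p) ^ (1 / p) :=
    Real.Lp_add_le Finset.univ a b hp1
  have habs : ∀ (g : Fin n → ℝ), 0 ≤ ∑ i : Fin n, |g i| ^ p := fun g =>
    Finset.sum_nonneg fun i _ => Real.rpow_nonneg (abs_nonneg _) p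
  have hmono : ∀ x y : ℝ, 0 ≤ x → x ≤ y → x ^ (1 / p) ≤ y ^ (1 / p) := fun x y hx hxy =>
    Real.rpow_le_rpow hx hxy (by positivity)
  have step : (∑ i : Fin n, |μ i| ^ p) ^ (1 / p)
      ≤ (∑ j : Fin n, |hh₁.eigenvalues hdim j| ^ p) ^ (1 / p)
        + (∑ j : Fin n, |hh₂.eigenvalues hdim j| ^ p) ^ (1 / p) := by
    have : ∑ i : Fin n, |μ i| ^ p = ∑ i : Fin n, |a i + b i| ^ p := by
      refine Finset.sum_congr rfl fun i _ => by rw [hsum i]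
    rw [this]
    refine minkowski.trans (add_le_add ?_ ?_)
    · exact hmono _ _ (habs a) key1
    · exact hmono _ _ (habs b) key2
  -- divide by n^{1/p}
  have hn0 : (0 : ℝ) < n := by exact_mod_cast hn
  have hdivrw : ∀ (S : ℝ), 0 ≤ S → (S / n) ^ (1 / p) = S ^ (1 / p) / (n : ℝ) ^ (1 / p) :=
    fun S hS => Real.div_rpow hS hn0.le _
  have hnp : (0 : ℝ) < (n : ℝ) ^ (1 / p) := Real.rpow_pos_of_pos hn0 _
  unfold symPNorm
  rw [hdivrw _ (habs _), hdivrw _ (habs _), hdivrw _ (habs _), ← add_div,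
    div_le_div_iff_of_pos_right hnp]
  exact step

end
end

section
/- For any two filtrations 𝓕₁, 𝓕₂ on a finite-dimensional complex vector space V of dimension n ≥ 1, there exists a basis e₁,…,e_n of V which jointly diagonalizes χ_{𝓕₁} and χ_{𝓕₂}: for any scalars λ₁,…,λ_n ∈ ℂ and j = 1,2, one has χ_{𝓕_j}(Σ_{i=1}^n λ_i e_i) = max_{i=1,…,n} χ_{𝓕_j}(λ_i e_i). -/
open scoped BigOperators
open Filter Classical

noncomputable section

variable {V : Type*} [AddCommGroup V] [Module ℂ V]

/-- A filtration on a complex vector space `V`: a left-continuous, decreasing family of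
subspaces which equals `⊤` for `t` small enough and `⊥` for `t` large enough. -/
structure IsVSFiltration (F : ℝ → Submodule ℂ V) : Prop where
  antitone : ∀ ⦃s t : ℝ⦄, s ≤ t → F t ≤ F s
  left_cont : ∀ t : ℝ, ∃ ε > 0, ∀ δ : ℝ, 0 < δ → δ < ε → F (t - δ) = F t
  eventually_top : ∃ t₀ : ℝ, ∀ t ≤ t₀, F t = ⊤
  eventually_bot : ∃ t₁ : ℝ, ∀ t, t₁ ≤ t → F t = ⊥

/-- The weight of a vector with respect to a filtration. -/
def filtWeight (F : ℝ → Submodule ℂ V) (s : V) : ℝ :=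
  sSup {l : ℝ | s ∈ F l}

/-- The non-Archimedean norm `χ_𝓕` associated with a filtration. -/
def filtChi (F : ℝ → Submodule ℂ V) (s : V) : ℝ :=
  if s = 0 then 0 else Real.exp (-(filtWeight F s))

/-- The jumping numbers `e_𝓕(j)` of a filtration. -/
def jumpNum (F : ℝ → Submodule ℂ V) (j : ℕ) : ℝ :=
  sSup {t : ℝ | j ≤ Module.finrank ℂ (F t)}

/-- The norm associated with a Hermitian inner product. -/
def hnorm (c : InnerProductSpace.Core ℂ V) : V → ℝ :=
  fun v => Real.sqrt ((c.inner v v).re)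

/-- The `j`-th element of the logarithmic relative spectrum of two norms. -/
def relSpec (N₀ N₁ : V → ℝ) (j : ℕ) : ℝ :=
  sSup {r : ℝ | ∃ W : Submodule ℂ V, Module.finrank ℂ W = j ∧
    r = sInf {x : ℝ | ∃ w ∈ W, w ≠ 0 ∧ x = Real.log (N₁ w / N₀ w)}}

/-- The distance `d_p` between two norms, `p ∈ [1, ∞)`. -/
def dp (p : ℝ) (N₀ N₁ : V → ℝ) : ℝ :=
  ((∑ j ∈ Finset.Icc 1 (Module.finrank ℂ V), |relSpec N₀ N₁ j| ^ p) /
    (Module.finrank ℂ V : ℝ)) ^ (1 / p)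

/-- The distance `d_∞` between two norms. -/
def dInf (N₀ N₁ : V → ℝ) : ℝ :=
  sSup {r : ℝ | ∃ j ∈ Finset.Icc 1 (Module.finrank ℂ V), r = |relSpec N₀ N₁ j|}

/-- A family of vectors is orthonormal with respect to a Hermitian inner product. -/
def OrthonormalFor (c : InnerProductSpace.Core ℂ V) {ι : Type*} (s : ι → V) : Prop :=
  ∀ i j, c.inner (s i) (s j) = if i = j then 1 else 0

/-- A family of vectors is orthogonal with respect to a Hermitian inner product. -/
def OrthogonalFor (c : InnerProductSpace.Core ℂ V) {ι : Type*} (s : ι → V) : Prop :=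
  ∀ i j, i ≠ j → c.inner (s i) (s j) = 0

/-- `c : ℝ → InnerProductSpace.Core ℂ V` is the geodesic ray of Hermitian norms emanating
from `c 0` associated with the filtration `F` via the adapted orthonormal basis `s`:
`s` is orthonormal for `c 0`, `s j ∈ 𝓕^{e_𝓕(j)} V`, and for each `t ≥ 0` the rescaled basis
`(exp (t e_𝓕(i)) • s i)` is orthonormal for `c t`. -/
def IsGeodesicRayFor (F : ℝ → Submodule ℂ V) {n : ℕ} (s : Fin n → V)
    (c : ℝ → InnerProductSpace.Core ℂ V) : Prop :=
  OrthonormalFor (c 0) s ∧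
  (∀ i : Fin n, s i ∈ F (jumpNum F (i.1 + 1))) ∧
  ∀ t : ℝ, 0 ≤ t → ∀ i j : Fin n,
    (c t).inner (Real.exp (t * jumpNum F (i.1 + 1)) • s i)
      (Real.exp (t * jumpNum F (j.1 + 1)) • s j) = if i = j then 1 else 0

/-- A (complex) norm on a vector space. -/
structure IsComplexNorm (N : V → ℝ) : Prop where
  eq_zero_iff : ∀ x : V, N x = 0 ↔ x = 0
  smul : ∀ (a : ℂ) (x : V), N (a • x) = ‖a‖ * N x
  add_le : ∀ x y : V, N (x + y) ≤ N x + N y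



/-! ### Auxiliary lemmas -/

universe u

section AuxLemmas

variable {W : Type u} [AddCommGroup W] [Module ℂ W]

lemma IsVSFiltration.memSet_nonempty {F : ℝ → Submodule ℂ W} (hF : IsVSFiltration F) (v : W) :
    {l : ℝ | v ∈ F l}.Nonempty := by
  obtain ⟨t₀, ht₀⟩ := hF.eventually_top
  exact ⟨t₀, by simp [ht₀ t₀ le_rfl]⟩

lemma IsVSFiltration.memSet_bddAbove {F : ℝ → Submodule ℂ W} (hF : IsVSFiltration F)
    {v : W} (hv : v ≠ 0) : BddAbove {l : ℝ | v ∈ F l} := by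
  obtain ⟨t₁, ht₁⟩ := hF.eventually_bot
  refine ⟨t₁, fun l hl => ?_⟩
  by_contra h
  push_neg at h
  have hb : F l = ⊥ := ht₁ l h.le
  simp only [Set.mem_setOf_eq, hb, Submodule.mem_bot] at hl
  exact hv hl

lemma IsVSFiltration.mem_weight {F : ℝ → Submodule ℂ W} (hF : IsVSFiltration F)
    {v : W} (hv : v ≠ 0) : v ∈ F (filtWeight F v) := by
  set w := filtWeight F v with hw
  obtain ⟨ε, hε, hδ⟩ := hF.left_cont w
  have hne := hF.memSet_nonempty v
  have hbdd := hF.memSet_bddAbove hv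
  have hlt : w - ε < sSup {l : ℝ | v ∈ F l} := by
    have : sSup {l : ℝ | v ∈ F l} = w := rfl
    linarith [this]
  obtain ⟨l, hl, hl2⟩ := exists_lt_of_lt_csSup hne hlt
  have hle : l ≤ w := le_csSup hbdd hl
  rcases eq_or_lt_of_le hle with h | h
  · rwa [h] at hl
  · have h1 : (0:ℝ) < w - l := by linarith
    have h2 : w - l < ε := by linarith
    have := hδ (w - l) h1 h2
    have hwl : w - (w - l) = l := by ring
    rw [hwl] at this
    rw [← this]
    exact hl

lemma IsVSFiltration.mem_iff_le_weight {F : ℝ → Submodule ℂ W} (hF : IsVSFiltration F)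
    {v : W} (hv : v ≠ 0) (t : ℝ) : v ∈ F t ↔ t ≤ filtWeight F v := by
  constructor
  · intro h
    exact le_csSup (hF.memSet_bddAbove hv) h
  · intro h
    exact hF.antitone h (hF.mem_weight hv)

lemma filtWeight_smul (F : ℝ → Submodule ℂ W) {c : ℂ} (hc : c ≠ 0) (v : W) :
    filtWeight F (c • v) = filtWeight F v := by
  unfold filtWeight
  congr 1
  ext l
  exact Submodule.smul_mem_iff _ hc

lemma IsVSFiltration.range_finite [FiniteDimensional ℂ W] {F : ℝ → Submodule ℂ W}
    (hF : IsVSFiltration F) : (Set.range F).Finite := by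
  apply Set.Finite.of_finite_image
    (f := fun p : Submodule ℂ W => Module.finrank ℂ p)
  · refine Set.Finite.subset (Set.finite_Iic (Module.finrank ℂ W)) ?_
    rintro _ ⟨p, _, rfl⟩
    exact Submodule.finrank_le p
  · rintro _ ⟨s, rfl⟩ _ ⟨t, rfl⟩ h
    rcases le_total s t with hst | hst
    · exact (Submodule.eq_of_le_of_finrank_le (hF.antitone hst) h.le).symm
    · exact Submodule.eq_of_le_of_finrank_le (hF.antitone hst) h.ge

lemma IsVSFiltration.weightRange_finite [FiniteDimensional ℂ W] {F : ℝ → Submodule ℂ W}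
    (hF : IsVSFiltration F) : (filtWeight F '' {v : W | v ≠ 0}).Finite := by
  apply Set.Finite.of_finite_image (f := F)
  · exact Set.Finite.subset hF.range_finite (Set.image_subset_range _ _)
  · rintro _ ⟨v, hv, rfl⟩ _ ⟨v', hv', rfl⟩ h
    have h1 : v ∈ F (filtWeight F v') := by rw [← h]; exact hF.mem_weight hv
    have h2 : v' ∈ F (filtWeight F v) := by rw [h]; exact hF.mem_weight hv'
    exact le_antisymm ((hF.mem_iff_le_weight hv' _).mp h2)
      ((hF.mem_iff_le_weight hv _).mp h1)

lemma exists_max_weight_sum [FiniteDimensional ℂ W] [Nontrivial W]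
    {F₁ F₂ : ℝ → Submodule ℂ W} (hF₁ : IsVSFiltration F₁) (hF₂ : IsVSFiltration F₂) :
    ∃ v₀ : W, v₀ ≠ 0 ∧ ∀ v : W, v ≠ 0 →
      filtWeight F₁ v + filtWeight F₂ v ≤ filtWeight F₁ v₀ + filtWeight F₂ v₀ := by
  set T := (fun v => filtWeight F₁ v + filtWeight F₂ v) '' {v : W | v ≠ 0} with hT
  have hTfin : T.Finite := by
    apply Set.Finite.subset
      (Set.Finite.image2 (· + ·) hF₁.weightRange_finite hF₂.weightRange_finite)
    rintro _ ⟨v, hv, rfl⟩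
    exact ⟨filtWeight F₁ v, ⟨v, hv, rfl⟩, filtWeight F₂ v, ⟨v, hv, rfl⟩, rfl⟩
  obtain ⟨u, hu⟩ := exists_ne (0 : W)
  have hTne : T.Nonempty := ⟨_, ⟨u, hu, rfl⟩⟩
  obtain ⟨v₀, hv₀, hv₀eq⟩ := hTne.csSup_mem hTfin
  refine ⟨v₀, hv₀, fun v hv => ?_⟩
  have hv₀eq' : filtWeight F₁ v₀ + filtWeight F₂ v₀ = sSup T := hv₀eq
  rw [hv₀eq']
  exact le_csSup hTfin.bddAbove ⟨v, hv, rfl⟩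

lemma IsVSFiltration.map {W' : Type u} [AddCommGroup W'] [Module ℂ W']
    {F : ℝ → Submodule ℂ W} (hF : IsVSFiltration F) (f : W →ₗ[ℂ] W')
    (hf : Function.Surjective f) : IsVSFiltration (fun t => (F t).map f) := by
  constructor
  · intro s t hst
    exact Submodule.map_mono (hF.antitone hst)
  · intro t
    obtain ⟨ε, hε, hδ⟩ := hF.left_cont t
    exact ⟨ε, hε, fun δ h1 h2 => by rw [hδ δ h1 h2]⟩
  · obtain ⟨t₀, ht₀⟩ := hF.eventually_top
    exact ⟨t₀, fun t ht => by rw [ht₀ t ht, Submodule.map_top, LinearMap.range_eq_top.mpr hf]⟩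
  · obtain ⟨t₁, ht₁⟩ := hF.eventually_bot
    exact ⟨t₁, fun t ht => by rw [ht₁ t ht, Submodule.map_bot]⟩

/-- Existence of a joint lift of a nonzero quotient class which is simultaneously
weight-maximizing for both filtrations, given that `v₀` maximizes the sum of weights. -/
lemma exists_joint_lift {F₁ F₂ : ℝ → Submodule ℂ W} (hF₁ : IsVSFiltration F₁)
    (hF₂ : IsVSFiltration F₂) {v₀ : W} (hv₀ : v₀ ≠ 0)
    (hmax : ∀ v : W, v ≠ 0 →
      filtWeight F₁ v + filtWeight F₂ v ≤ filtWeight F₁ v₀ + filtWeight F₂ v₀)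
    {p : Submodule ℂ W} (hp : p = Submodule.span ℂ {v₀})
    {q : W ⧸ p} (hq : q ≠ 0) :
    ∃ e : W, p.mkQ e = q ∧
      (∀ t, q ∈ (F₁ t).map p.mkQ → e ∈ F₁ t) ∧
      (∀ t, q ∈ (F₂ t).map p.mkQ → e ∈ F₂ t) := by
  set G₁ := fun t => (F₁ t).map p.mkQ with hG₁def
  set G₂ := fun t => (F₂ t).map p.mkQ with hG₂def
  have hG₁ : IsVSFiltration G₁ := hF₁.map p.mkQ p.mkQ_surjective
  have hG₂ : IsVSFiltration G₂ := hF₂.map p.mkQ p.mkQ_surjective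
  set a := filtWeight G₁ q with ha
  set b := filtWeight G₂ q with hb
  obtain ⟨e, he₁, heq⟩ : ∃ y ∈ F₁ a, p.mkQ y = q := Submodule.mem_map.mp (hG₁.mem_weight hq)
  obtain ⟨e', he'₂, heq'⟩ : ∃ y ∈ F₂ b, p.mkQ y = q := Submodule.mem_map.mp (hG₂.mem_weight hq)
  have hene : e ≠ 0 := by rintro rfl; rw [map_zero] at heq; exact hq heq.symm
  have he'ne : e' ≠ 0 := by rintro rfl; rw [map_zero] at heq'; exact hq heq'.symm
  -- weight comparisons with the quotient
  have hproj : ∀ (x : W) (t : ℝ) (F : ℝ → Submodule ℂ W), p.mkQ x = q → x ∈ F t →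
      q ∈ (F t).map p.mkQ := fun x t F hx hxt => ⟨x, hxt, hx⟩
  have hw1e : filtWeight F₁ e = a := by
    apply le_antisymm
    · refine csSup_le (hF₁.memSet_nonempty e) fun l hl => ?_
      exact (hG₁.mem_iff_le_weight hq l).mp (hproj e l F₁ heq hl)
    · exact (hF₁.mem_iff_le_weight hene a).mp he₁
  have hw2e' : filtWeight F₂ e' = b := by
    apply le_antisymm
    · refine csSup_le (hF₂.memSet_nonempty e') fun l hl => ?_
      exact (hG₂.mem_iff_le_weight hq l).mp (hproj e' l F₂ heq' hl)
    · exact (hF₂.mem_iff_le_weight he'ne b).mp he'₂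
  have hw2e : filtWeight F₂ e ≤ b := by
    refine csSup_le (hF₂.memSet_nonempty e) fun l hl => ?_
    exact (hG₂.mem_iff_le_weight hq l).mp (hproj e l F₂ heq hl)
  -- generic final step
  have hfin : ∀ x : W, p.mkQ x = q → x ∈ F₁ a → x ∈ F₂ b →
      (∀ t, q ∈ (F₁ t).map p.mkQ → x ∈ F₁ t) ∧
      (∀ t, q ∈ (F₂ t).map p.mkQ → x ∈ F₂ t) := by
    intro x hx hx1 hx2
    constructor
    · intro t ht
      exact hF₁.antitone ((hG₁.mem_iff_le_weight hq t).mp ht) hx1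
    · intro t ht
      exact hF₂.antitone ((hG₂.mem_iff_le_weight hq t).mp ht) hx2
  by_cases h : e ∈ F₂ b
  · exact ⟨e, heq, (hfin e heq he₁ h).1, (hfin e heq he₁ h).2⟩
  · -- use e' ; show e' ∈ F₁ a
    have hw2elt : filtWeight F₂ e < b := by
      rcases lt_or_eq_of_le hw2e with h' | h'
      · exact h'
      · exact absurd (h' ▸ hF₂.mem_weight hene) h
    set d := e' - e with hd
    have hdp : d ∈ p := by
      rw [← Submodule.ker_mkQ p, LinearMap.mem_ker, map_sub, heq', heq, sub_self]
    rw [hp] at hdp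
    obtain ⟨c, hc⟩ := Submodule.mem_span_singleton.mp hdp
    have hdne : d ≠ 0 := by
      intro h0
      have : e' = e := by rwa [sub_eq_zero] at h0
      exact h (this ▸ he'₂)
    have hcne : c ≠ 0 := by rintro rfl; simp at hc; exact hdne hc.symm
    -- w₂ d = w₂ e
    have hd2ge : filtWeight F₂ e ≤ filtWeight F₂ d := by
      rw [← hF₂.mem_iff_le_weight hdne]
      refine sub_mem ?_ (hF₂.mem_weight hene)
      exact hF₂.antitone hw2elt.le he'₂
    have hd2le : filtWeight F₂ d ≤ filtWeight F₂ e := by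
      by_contra hcon
      push_neg at hcon
      set t := min b (filtWeight F₂ d) with ht
      have het : e ∈ F₂ t := by
        have h1 : e' ∈ F₂ t := hF₂.antitone (min_le_left _ _) he'₂
        have h2 : d ∈ F₂ t :=
          hF₂.antitone (min_le_right _ _) (hF₂.mem_weight hdne)
        have : e = e' - d := by rw [hd]; abel
        rw [this]
        exact sub_mem h1 h2
      have : t ≤ filtWeight F₂ e := (hF₂.mem_iff_le_weight hene t).mp het
      rcases le_or_gt b (filtWeight F₂ d) with hbd | hbd
      · rw [ht, min_eq_left hbd] at this; linarith
      · rw [ht, min_eq_right hbd.le] at this; linarith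
    have hd2 : filtWeight F₂ d = filtWeight F₂ e := le_antisymm hd2le hd2ge
    have hv02 : filtWeight F₂ v₀ = filtWeight F₂ e := by
      rw [← hd2, ← hc, filtWeight_smul F₂ hcne]
    -- maximality gives a ≤ w₁ v₀
    have hmaxe := hmax e hene
    have hav0 : a ≤ filtWeight F₁ v₀ := by
      rw [hv02] at hmaxe
      rw [← hw1e]
      linarith
    have hv0F1 : v₀ ∈ F₁ a := (hF₁.mem_iff_le_weight hv₀ a).mpr hav0
    have he'1 : e' ∈ F₁ a := by
      have : e' = e + d := by rw [hd]; abel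
      rw [this, ← hc]
      exact add_mem he₁ (Submodule.smul_mem _ c hv0F1)
    exact ⟨e', heq', (hfin e' heq' he'1 he'₂).1, (hfin e' heq' he'1 he'₂).2⟩

/-- Key induction: existence of a linearly independent family jointly adapted to two
filtrations. -/
lemma exists_joint_adapted (m : ℕ) :
    ∀ (W : Type u) [AddCommGroup W] [Module ℂ W] [FiniteDimensional ℂ W]
      (F₁ F₂ : ℝ → Submodule ℂ W), IsVSFiltration F₁ → IsVSFiltration F₂ →
      Module.finrank ℂ W = m →
      ∃ e : Fin m → W, LinearIndependent ℂ e ∧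
        (∀ (t : ℝ) (lam : Fin m → ℂ),
          (∑ i, lam i • e i) ∈ F₁ t → ∀ i, lam i • e i ∈ F₁ t) ∧
        (∀ (t : ℝ) (lam : Fin m → ℂ),
          (∑ i, lam i • e i) ∈ F₂ t → ∀ i, lam i • e i ∈ F₂ t) := by
  induction m with
  | zero =>
    intro W _ _ _ F₁ F₂ hF₁ hF₂ hdim
    exact ⟨Fin.elim0, linearIndependent_empty_type,
      fun t lam _ i => i.elim0, fun t lam _ i => i.elim0⟩
  | succ m ih =>
    intro W _ _ _ F₁ F₂ hF₁ hF₂ hdim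
    have : Nontrivial W := (Module.finrank_pos_iff (R := ℂ)).mp (by rw [hdim]; exact m.succ_pos)
    obtain ⟨v₀, hv₀, hmax⟩ := exists_max_weight_sum hF₁ hF₂
    set p := Submodule.span ℂ {v₀} with hp
    have hdimQ : Module.finrank ℂ (W ⧸ p) = m := by
      have h1 := Submodule.finrank_quotient_add_finrank p
      rw [finrank_span_singleton hv₀] at h1
      omega
    set G₁ := fun t => (F₁ t).map p.mkQ with hG₁def
    set G₂ := fun t => (F₂ t).map p.mkQ with hG₂def
    have hG₁ : IsVSFiltration G₁ := hF₁.map p.mkQ p.mkQ_surjective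
    have hG₂ : IsVSFiltration G₂ := hF₂.map p.mkQ p.mkQ_surjective
    obtain ⟨eb, hebli, heb1, heb2⟩ := ih (W ⧸ p) G₁ G₂ hG₁ hG₂ hdimQ
    -- lift each eb i
    have hlift : ∀ i : Fin m, ∃ f : W, p.mkQ f = eb i ∧
        (∀ t, eb i ∈ G₁ t → f ∈ F₁ t) ∧ (∀ t, eb i ∈ G₂ t → f ∈ F₂ t) := fun i =>
      exists_joint_lift hF₁ hF₂ hv₀ hmax rfl (hebli.ne_zero i)
    choose f hf hf1 hf2 using hlift
    set e : Fin (m + 1) → W := Fin.cons v₀ f with he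
    have hmkv₀ : p.mkQ v₀ = 0 := by
      rw [← LinearMap.mem_ker, Submodule.ker_mkQ]
      exact Submodule.mem_span_singleton_self v₀
    -- linear independence
    have hli : LinearIndependent ℂ e := by
      rw [Fintype.linearIndependent_iff]
      intro g hg
      have hsum : ∑ i : Fin (m + 1), g i • e i
          = g 0 • v₀ + ∑ i : Fin m, g i.succ • f i := by
        rw [Fin.sum_univ_succ]
        simp [he]
      have hq0 : ∑ i : Fin m, g i.succ • eb i = 0 := by
        have h2 := congrArg p.mkQ hg
        rw [hsum, map_zero, map_add, map_smul, hmkv₀, smul_zero, zero_add, map_sum] at h2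
        simp only [map_smul, hf] at h2
        exact h2
      have hgs : ∀ i : Fin m, g i.succ = 0 :=
        Fintype.linearIndependent_iff.mp hebli (fun i => g i.succ) hq0
      have hg0 : g 0 = 0 := by
        rw [hsum] at hg
        simp only [hgs, zero_smul, Finset.sum_const_zero, add_zero] at hg
        exact (smul_eq_zero.mp hg).resolve_right hv₀
      intro i
      rcases Fin.eq_zero_or_eq_succ i with h | ⟨j, rfl⟩
      · rwa [h]
      · exact hgs j
    -- adaptedness: a generic argument for each of the two filtrations
    have key : ∀ (F : ℝ → Submodule ℂ W), IsVSFiltration F →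
        (∀ (t : ℝ) (lam : Fin m → ℂ),
          (∑ i, lam i • eb i) ∈ (fun t => (F t).map p.mkQ) t →
            ∀ i, lam i • eb i ∈ (fun t => (F t).map p.mkQ) t) →
        (∀ i, ∀ t, eb i ∈ (F t).map p.mkQ → f i ∈ F t) →
        ∀ (t : ℝ) (lam : Fin (m + 1) → ℂ),
          (∑ i, lam i • e i) ∈ F t → ∀ i, lam i • e i ∈ F t := by
      intro F hF hadQ hliftF t lam hx
      set x := ∑ i, lam i • e i with hxdef
      have hxdec : x = lam 0 • v₀ + ∑ i : Fin m, lam i.succ • f i := by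
        rw [hxdef, Fin.sum_univ_succ]
        simp [he]
      have hmkx : p.mkQ x = ∑ i : Fin m, lam i.succ • eb i := by
        rw [hxdec, map_add, map_smul, hmkv₀, smul_zero, zero_add, map_sum]
        simp only [map_smul, hf]
      have hxQ : (∑ i : Fin m, lam i.succ • eb i) ∈ (F t).map p.mkQ := by
        rw [← hmkx]
        exact ⟨x, hx, rfl⟩
      have hQall := hadQ t (fun i => lam i.succ) hxQ
      have hterm : ∀ i : Fin m, lam i.succ • f i ∈ F t := by
        intro i
        by_cases hz : lam i.succ = 0
        · simp [hz]
        · have : eb i ∈ (F t).map p.mkQ :=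
            (Submodule.smul_mem_iff _ hz).mp (hQall i)
          exact Submodule.smul_mem _ _ (hliftF i t this)
      have hy : (∑ i : Fin m, lam i.succ • f i) ∈ F t := sum_mem fun i _ => hterm i
      have h0 : lam 0 • v₀ ∈ F t := by
        have : lam 0 • v₀ = x - ∑ i : Fin m, lam i.succ • f i := by
          rw [hxdec]; abel
        rw [this]
        exact sub_mem hx hy
      intro i
      rcases Fin.eq_zero_or_eq_succ i with h | ⟨j, rfl⟩
      · rw [h]; simpa [he] using h0
      · simpa [he] using hterm j
    exact ⟨e, hli, key F₁ hF₁ heb1 (fun i => hf1 i), key F₂ hF₂ heb2 (fun i => hf2 i)⟩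

/-- Conversion: an adapted linearly independent family diagonalizes `filtChi`. -/
lemma chi_eq_of_adapted {F : ℝ → Submodule ℂ W} (hF : IsVSFiltration F)
    {n : ℕ} (hn : 1 ≤ n) {e : Fin n → W} (hli : LinearIndependent ℂ e)
    (had : ∀ (t : ℝ) (lam : Fin n → ℂ),
      (∑ i, lam i • e i) ∈ F t → ∀ i, lam i • e i ∈ F t)
    (lam : Fin n → ℂ) :
    filtChi F (∑ i, lam i • e i) = ⨆ i, filtChi F (lam i • e i) := by
  have hne : Nonempty (Fin n) := ⟨⟨0, hn⟩⟩
  by_cases hall : ∀ i, lam i = 0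
  · have h1 : (∑ i, lam i • e i) = 0 := by simp [hall]
    have h2 : ∀ i, lam i • e i = (0 : W) := by intro i; simp [hall i]
    have h2' : ∀ i, filtChi F (lam i • e i) = 0 := fun i => by
      rw [h2 i]; simp [filtChi]
    rw [h1]
    have h0 : filtChi F (0 : W) = 0 := by simp [filtChi]
    simp only [h2', h0]
    exact (ciSup_const (ι := Fin n) (a := (0:ℝ))).symm
  · push_neg at hall
    obtain ⟨i₀, hi₀⟩ := hall
    set x := ∑ i, lam i • e i with hx
    have hxne : x ≠ 0 := by
      intro h0
      exact hi₀ (Fintype.linearIndependent_iff.mp hli lam h0 i₀)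
    have hnz : ∀ i, lam i ≠ 0 → lam i • e i ≠ 0 := fun i hi =>
      smul_ne_zero hi (hli.ne_zero i)
    set s := Finset.univ.filter (fun i => lam i ≠ 0) with hs
    have hsne : s.Nonempty := ⟨i₀, by simp [hs, hi₀]⟩
    set tstar := s.inf' hsne (fun i => filtWeight F (lam i • e i)) with htstar
    -- x ∈ F tstar
    have hxmem : x ∈ F tstar := by
      refine sum_mem fun i _ => ?_
      by_cases hz : lam i = 0
      · simp [hz]
      · rw [hF.mem_iff_le_weight (hnz i hz)]
        exact Finset.inf'_le _ (by simp [hs, hz])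
    have hwx : filtWeight F x = tstar := by
      apply le_antisymm
      · obtain ⟨istar, histar, hieq⟩ :=
          Finset.exists_mem_eq_inf' hsne (fun i => filtWeight F (lam i • e i))
        have histarnz : lam istar ≠ 0 := by
          simpa [hs] using histar
        have hmem := had (filtWeight F x) lam (hF.mem_weight hxne) istar
        rw [htstar, hieq]
        exact (hF.mem_iff_le_weight (hnz istar histarnz) _).mp hmem
      · exact (hF.mem_iff_le_weight hxne tstar).mp hxmem
    have hrhs : (⨆ i, filtChi F (lam i • e i)) = Real.exp (-tstar) := by
      apply le_antisymm
      · refine ciSup_le fun i => ?_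
        by_cases hz : lam i = 0
        · simp [filtChi, hz, (Real.exp_pos _).le]
        · rw [filtChi, if_neg (hnz i hz)]
          apply Real.exp_le_exp.mpr
          simp only [neg_le_neg_iff]
          exact Finset.inf'_le _ (by simp [hs, hz])
      · obtain ⟨istar, histar, hieq⟩ :=
          Finset.exists_mem_eq_inf' hsne (fun i => filtWeight F (lam i • e i))
        have histarnz : lam istar ≠ 0 := by simpa [hs] using histar
        have : filtChi F (lam istar • e istar) = Real.exp (-tstar) := by
          rw [filtChi, if_neg (hnz istar histarnz), htstar, hieq]
        rw [← this]
        exact le_ciSup (f := fun i => filtChi F (lam i • e i))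
          (Set.Finite.bddAbove (Set.finite_range _)) istar
    rw [hrhs, filtChi, if_neg hxne, hwx]

end AuxLemmas

/-- any two filtrations on a finite-dimensional complex vector space of
dimension `n ≥ 1` admit a jointly diagonalizing basis. -/
theorem exists_jointly_diagonalizing_basis
    {V : Type*} [AddCommGroup V] [Module ℂ V] [FiniteDimensional ℂ V]
    {n : ℕ} (hn : 1 ≤ n) (hdim : Module.finrank ℂ V = n)
    (F₁ F₂ : ℝ → Submodule ℂ V) (hF₁ : IsVSFiltration F₁) (hF₂ : IsVSFiltration F₂) :
    ∃ e : Module.Basis (Fin n) ℂ V, ∀ lam : Fin n → ℂ,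
      filtChi F₁ (∑ i, lam i • e i) = ⨆ i, filtChi F₁ (lam i • e i) ∧
      filtChi F₂ (∑ i, lam i • e i) = ⨆ i, filtChi F₂ (lam i • e i) := by
  obtain ⟨e, hli, had1, had2⟩ := exists_joint_adapted n V F₁ F₂ hF₁ hF₂ hdim
  have hcard : Fintype.card (Fin n) = Module.finrank ℂ V := by simp [hdim]
  have : Nonempty (Fin n) := ⟨⟨0, hn⟩⟩
  refine ⟨basisOfLinearIndependentOfCardEqFinrank hli hcard, fun lam => ?_⟩
  rw [coe_basisOfLinearIndependentOfCardEqFinrank]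
  exact ⟨chi_eq_of_adapted hF₁ hn hli had1 lam, chi_eq_of_adapted hF₂ hn hli had2 lam⟩

end
end

section
/- Let V be a finite-dimensional complex vector space, 𝓕 a filtration on V, H₀ a Hermitian norm on V, and H_t^𝓕 (t ≥ 0) the geodesic ray of Hermitian norms emanating from H₀ associated with 𝓕 via an adapted orthonormal basis. Then for every f ∈ V, f ≠ 0, the limit lim_{t→∞} (1/t)·log‖f‖_{H_t^𝓕} exists and equals log χ_𝓕(f) = −w_𝓕(f). -/
open scoped BigOperators
open Filter Classical

noncomputable section

variable {V : Type*} [AddCommGroup V] [Module ℂ V]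

/-- A filtration on a complex vector space `V`: a left-continuous, decreasing family of
subspaces which equals `⊤` for `t` small enough and `⊥` for `t` large enough. -/
structure IsVecFiltration (F : ℝ → Submodule ℂ V) : Prop where
  antitone : ∀ ⦃s t : ℝ⦄, s ≤ t → F t ≤ F s
  left_cont : ∀ t : ℝ, ∃ ε > 0, ∀ δ : ℝ, 0 < δ → δ < ε → F (t - δ) = F t
  eventually_top : ∃ t₀ : ℝ, ∀ t ≤ t₀, F t = ⊤
  eventually_bot : ∃ t₁ : ℝ, ∀ t, t₁ ≤ t → F t = ⊥

section AuxLemmas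

variable {V : Type*} [AddCommGroup V] [Module ℂ V]

lemma core_inner_zero_left' (c : InnerProductSpace.Core ℂ V) (y : V) : c.inner 0 y = 0 := by
  have h := c.smul_left 0 y 0
  simpa using h

lemma core_inner_add_right' (c : InnerProductSpace.Core ℂ V) (x y z : V) :
    c.inner x (y + z) = c.inner x y + c.inner x z := by
  have := congrArg (starRingEnd ℂ) (c.add_left y z x)
  simpa [c.conj_inner_symm, map_add] using this

lemma core_inner_smul_right' (c : InnerProductSpace.Core ℂ V) (x y : V) (r : ℂ) :
    c.inner x (r • y) = r * c.inner x y := by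
  have := congrArg (starRingEnd ℂ) (c.smul_left y x r)
  simpa [c.conj_inner_symm, map_mul] using this

lemma core_inner_sum_left' (c : InnerProductSpace.Core ℂ V) {ι : Type*} (s : Finset ι)
    (v : ι → V) (y : V) : c.inner (∑ i ∈ s, v i) y = ∑ i ∈ s, c.inner (v i) y := by
  classical
  induction s using Finset.induction with
  | empty => simpa using core_inner_zero_left' c y
  | insert _ _ h ih => simp [Finset.sum_insert h, c.add_left, ih]

lemma core_inner_sum_right' (c : InnerProductSpace.Core ℂ V) {ι : Type*} (s : Finset ι)
    (v : ι → V) (x : V) : c.inner x (∑ i ∈ s, v i) = ∑ i ∈ s, c.inner x (v i) := by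
  classical
  induction s using Finset.induction with
  | empty =>
      have h := congrArg (starRingEnd ℂ) (core_inner_zero_left' c x)
      simpa [c.conj_inner_symm] using h
  | insert _ _ h ih => simp [Finset.sum_insert h, core_inner_add_right', ih]

lemma core_inner_self_re' (c : InnerProductSpace.Core ℂ V) {n : ℕ} (b : Module.Basis (Fin n) ℂ V)
    (g : Fin n → ℝ)
    (h : ∀ i j, c.inner (b i) (b j) = if i = j then (g i : ℂ) else 0) (f : V) :
    (c.inner f f).re = ∑ i, ‖b.repr f i‖ ^ 2 * g i := by
  conv_lhs => rw [← b.sum_repr f]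
  rw [core_inner_sum_left']
  have key : ∀ i : Fin n, c.inner (b.repr f i • b i) (∑ j, b.repr f j • b j)
      = (Complex.normSq (b.repr f i) * g i : ℝ) := by
    intro i
    rw [core_inner_sum_right']
    rw [Finset.sum_eq_single i]
    · rw [c.smul_left, core_inner_smul_right', h i i]
      simp [mul_comm, mul_assoc, Complex.normSq_eq_conj_mul_self]
      ring
    · intro j _ hj
      rw [c.smul_left, core_inner_smul_right', h i j, if_neg (Ne.symm hj)]
      ring
    · intro hi; exact absurd (Finset.mem_univ i) hi
  rw [Finset.sum_congr rfl fun i _ => key i, ← Complex.ofReal_sum, Complex.ofReal_re]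
  exact Finset.sum_congr rfl fun i _ => by
    rw [Complex.normSq_eq_norm_sq]

lemma core_inner_diag' {n : ℕ} (c : InnerProductSpace.Core ℂ V) (b : Fin n → V)
    (E : Fin n → ℝ) (hE : ∀ i, E i ≠ 0)
    (h : ∀ i j, c.inner (E i • b i) (E j • b j) = if i = j then 1 else 0) (i j : Fin n) :
    c.inner (b i) (b j) = if i = j then ((((E i) ^ 2)⁻¹ : ℝ) : ℂ) else 0 := by
  have h' := h i j
  have hsm : ∀ (r : ℝ) (v : V), r • v = (r : ℂ) • v := fun r v => rfl
  rw [hsm (E i), hsm (E j), c.smul_left, core_inner_smul_right', Complex.conj_ofReal] at h'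
  have hEi : (E i : ℂ) ≠ 0 := Complex.ofReal_ne_zero.mpr (hE i)
  have hEj : (E j : ℂ) ≠ 0 := Complex.ofReal_ne_zero.mpr (hE j)
  by_cases hij : i = j
  · subst hij
    rw [if_pos rfl] at h' ⊢
    have h2 : (E i : ℂ) ^ 2 * c.inner (b i) (b i) = 1 := by rw [sq]; rw [← h']; ring
    have h3 := inv_eq_of_mul_eq_one_right h2
    rw [← h3]
    push_cast
    ring
  · rw [if_neg hij] at h' ⊢
    simpa [hEi, hEj, mul_eq_zero] using h'

section Filt
variable [FiniteDimensional ℂ V] {F : ℝ → Submodule ℂ V}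

lemma jump_bdd' (hF : IsVecFiltration F) {j : ℕ} (hj : 1 ≤ j) :
    BddAbove {t : ℝ | j ≤ Module.finrank ℂ (F t)} := by
  obtain ⟨t₁, h1⟩ := hF.eventually_bot
  refine ⟨t₁, fun t ht => ?_⟩
  by_contra hlt
  push_neg at hlt
  have ht' : j ≤ Module.finrank ℂ (F t) := ht
  rw [h1 t hlt.le] at ht'
  rw [finrank_bot] at ht'
  omega

lemma jump_nonempty' (hF : IsVecFiltration F) {j : ℕ} (hj : j ≤ Module.finrank ℂ V) :
    {t : ℝ | j ≤ Module.finrank ℂ (F t)}.Nonempty := by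
  obtain ⟨t₀, h0⟩ := hF.eventually_top
  refine ⟨t₀, ?_⟩
  show j ≤ Module.finrank ℂ (F t₀)
  rw [h0 t₀ le_rfl, finrank_top]
  exact hj

lemma jump_dc' (hF : IsVecFiltration F) {j : ℕ} {s t : ℝ} (hst : s ≤ t)
    (ht : j ≤ Module.finrank ℂ (F t)) : j ≤ Module.finrank ℂ (F s) :=
  le_trans ht (Submodule.finrank_mono (hF.antitone hst))

lemma le_jump' (hF : IsVecFiltration F) {j : ℕ} (hj : 1 ≤ j) {t : ℝ}
    (ht : j ≤ Module.finrank ℂ (F t)) : t ≤ jumpNum F j :=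
  le_csSup (jump_bdd' hF hj) ht

lemma jump_antitone' (hF : IsVecFiltration F) {j j' : ℕ} (h1 : 1 ≤ j) (h : j ≤ j')
    (hn : j' ≤ Module.finrank ℂ V) : jumpNum F j' ≤ jumpNum F j :=
  csSup_le_csSup (jump_bdd' hF h1) (jump_nonempty' hF hn)
    (fun t ht => le_trans h ht)

lemma weight_isGreatest' (hF : IsVecFiltration F) {n : ℕ} (b : Module.Basis (Fin n) ℂ V)
    (hb : ∀ i : Fin n, b i ∈ F (jumpNum F (i.1 + 1))) (f : V)
    (hS : (b.repr f).support.Nonempty) :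
    IsGreatest {l : ℝ | f ∈ F l}
      ((b.repr f).support.inf' hS fun i => jumpNum F (i.1 + 1)) := by
  classical
  set m := (b.repr f).support.inf' hS fun i => jumpNum F (i.1 + 1) with hm
  have hn : Module.finrank ℂ V = n := by
    rw [Module.finrank_eq_card_basis b, Fintype.card_fin]
  constructor
  · show f ∈ F m
    have hrep := b.sum_repr f
    rw [← hrep]
    refine Submodule.sum_mem _ fun i _ => ?_
    by_cases hi : b.repr f i = 0
    · simp [hi]
    · have hiS : i ∈ (b.repr f).support := Finsupp.mem_support_iff.mpr hi
      have hle : m ≤ jumpNum F (i.1 + 1) := Finset.inf'_le _ hiS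
      exact Submodule.smul_mem _ _ (hF.antitone hle (hb i))
  · intro l hl
    by_contra hml
    push_neg at hml
    set T : Finset (Fin n) := Finset.univ.filter (fun i => l ≤ jumpNum F (i.1 + 1)) with hT
    set k := T.card with hk
    have hspan : Submodule.span ℂ (b '' ↑T) ≤ F l := by
      rw [Submodule.span_le]
      rintro x ⟨i, hiT, rfl⟩
      simp only [hT, Finset.coe_filter, Set.mem_setOf_eq, Finset.mem_coe, Finset.mem_univ,
        true_and] at hiT
      exact hF.antitone hiT (hb i)
    have hli : LinearIndependent ℂ (fun i : {x // x ∈ T} => b i.1) :=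
      b.linearIndependent.comp _ Subtype.val_injective
    have hrange : Set.range (fun i : {x // x ∈ T} => b i.1) = b '' ↑T := by
      ext x
      simp [Set.mem_image]
    have hdspan : Module.finrank ℂ (Submodule.span ℂ (b '' ↑T)) = k := by
      rw [← hrange, finrank_span_eq_card hli, Fintype.card_coe]
    have hdl : Module.finrank ℂ (F l) ≤ k := by
      by_contra h'
      push_neg at h'
      have hkn : k < n := by
        have := Submodule.finrank_le (F l)
        omega
      have hlle : l ≤ jumpNum F (k + 1) := le_jump' hF (by omega) h'
      have hiT : (⟨k, hkn⟩ : Fin n) ∈ T := by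
        simp only [hT, Finset.mem_filter, Finset.mem_univ, true_and]
        exact hlle
      have hsub : Finset.Iic (⟨k, hkn⟩ : Fin n) ⊆ T := by
        intro j hj
        simp only [Finset.mem_Iic] at hj
        simp only [hT, Finset.mem_filter, Finset.mem_univ, true_and]
        have hj' : j.1 ≤ k := Fin.le_def.mp hj
        refine le_trans hlle (jump_antitone' hF (by omega) (by omega) (by omega))
      have hcard := Finset.card_le_card hsub
      rw [Fin.card_Iic] at hcard
      simp only [← hk] at hcard
      omega
    have heq : Submodule.span ℂ (b '' ↑T) = F l :=
      Submodule.eq_of_le_of_finrank_le hspan (by rw [hdspan]; exact hdl)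
    obtain ⟨i0, hi0S, hi0⟩ := Finset.exists_mem_eq_inf' hS fun i => jumpNum F (i.1 + 1)
    have hfspan : f ∈ Submodule.span ℂ (b '' ↑T) := by rw [heq]; exact hl
    have hsupp : ↑(b.repr f).support ⊆ (↑T : Set (Fin n)) := b.mem_span_image.mp hfspan
    have hi0T : i0 ∈ T := hsupp hi0S
    simp only [hT, Finset.mem_filter, Finset.mem_univ, true_and] at hi0T
    simp only [hm, hi0] at hml
    linarith

end Filt

end AuxLemmas

/-- along the geodesic ray of Hermitian norms associated with a filtration `F`
and emanating from `H₀`, for every `f ≠ 0` the limit `lim_{t→∞} (log ‖f‖_{H_t^𝓕}) / t`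
exists and equals `log χ_𝓕(f) = -w_𝓕(f)`. -/
theorem geodesic_ray_log_norm_tendsto
    {V : Type*} [AddCommGroup V] [Module ℂ V] [FiniteDimensional ℂ V]
    {n : ℕ} (F : ℝ → Submodule ℂ V) (hF : IsVecFiltration F)
    (b : Module.Basis (Fin n) ℂ V) (c : ℝ → InnerProductSpace.Core ℂ V)
    (hray : IsGeodesicRayFor F (⇑b) c) (f : V) (hf : f ≠ 0) :
    Filter.Tendsto (fun t : ℝ => Real.log (hnorm (c t) f) / t) Filter.atTop
      (nhds (Real.log (filtChi F f))) ∧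
    Real.log (filtChi F f) = -(filtWeight F f) := by
  classical
  obtain ⟨horth0, hbF, hray2⟩ := hray
  have hrepr : b.repr f ≠ 0 := fun h0 => hf (by simpa using b.repr.map_eq_zero_iff.mp h0)
  have hS : (b.repr f).support.Nonempty := Finsupp.support_nonempty_iff.mpr hrepr
  set m := (b.repr f).support.inf' hS (fun i => jumpNum F (i.1 + 1)) with hm
  have hgr := weight_isGreatest' hF b hbF f hS
  have hw : filtWeight F f = m := hgr.csSup_eq
  have hchi : Real.log (filtChi F f) = -(filtWeight F f) := by
    rw [filtChi, if_neg hf, Real.log_exp]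
  refine ⟨?_, hchi⟩
  rw [hchi, hw]
  set a := b.repr f with ha
  obtain ⟨i0, hi0S, hi0⟩ := Finset.exists_mem_eq_inf' hS fun i => jumpNum F (i.1 + 1)
  set e : Fin n → ℝ := fun i => jumpNum F (i.1 + 1) with he
  set Q : ℝ → ℝ := fun t => ∑ i ∈ a.support, ‖a i‖ ^ 2 * Real.exp (-(2 * t) * e i) with hQdef
  have hnormQ : ∀ t : ℝ, 0 ≤ t → hnorm (c t) f = Real.sqrt (Q t) := by
    intro t ht
    have hdiag := core_inner_diag' (c t) b (fun i => Real.exp (t * e i))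
      (fun i => (Real.exp_pos _).ne') (hray2 t ht)
    have hre := core_inner_self_re' (c t) b (fun i => ((Real.exp (t * e i)) ^ 2)⁻¹) hdiag f
    show Real.sqrt (((c t).inner f f).re) = _
    rw [hre]
    congr 1
    rw [Finset.sum_congr rfl (fun i _ => by
      rw [show ((Real.exp (t * e i)) ^ 2)⁻¹ = Real.exp (-(2 * t) * e i) by
        rw [sq, ← Real.exp_add, ← Real.exp_neg]; ring_nf])]
    exact (Finset.sum_subset (Finset.subset_univ _)
      (fun i _ hi => by
        have h0 := Finsupp.notMem_support_iff.mp hi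
        simp only [ha] at h0
        simp [h0])).symm
  set A := ‖a i0‖ ^ 2 with hAdef
  have hai0 : a i0 ≠ 0 := Finsupp.mem_support_iff.mp hi0S
  have hA : 0 < A := by rw [hAdef]; exact pow_pos (norm_pos_iff.mpr hai0) 2
  set C := ∑ i ∈ a.support, ‖a i‖ ^ 2 with hCdef
  have hC : 0 < C := by
    refine Finset.sum_pos' (fun i _ => by positivity) ⟨i0, hi0S, pow_pos (norm_pos_iff.mpr hai0) 2⟩
  have he_i0 : e i0 = m := hi0.symm
  have hlow : ∀ t : ℝ, A * Real.exp (-(2 * t) * m) ≤ Q t := by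
    intro t
    rw [← he_i0]
    exact Finset.single_le_sum (f := fun i => ‖a i‖ ^ 2 * Real.exp (-(2 * t) * e i))
      (fun i _ => by positivity) hi0S
  have hup : ∀ t : ℝ, 0 ≤ t → Q t ≤ C * Real.exp (-(2 * t) * m) := by
    intro t ht
    rw [hCdef, Finset.sum_mul]
    refine Finset.sum_le_sum fun i hi => ?_
    have hmi : m ≤ e i := Finset.inf'_le _ hi
    have : Real.exp (-(2 * t) * e i) ≤ Real.exp (-(2 * t) * m) := by
      apply Real.exp_le_exp.mpr
      nlinarith
    nlinarith [norm_nonneg (a i), Real.exp_pos (-(2 * t) * e i)]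
  have hQpos : ∀ t : ℝ, 0 < Q t := fun t =>
    lt_of_lt_of_le (mul_pos hA (Real.exp_pos _)) (hlow t)
  -- squeeze
  have h2t : Filter.Tendsto (fun t : ℝ => 2 * t) Filter.atTop Filter.atTop :=
    Filter.Tendsto.const_mul_atTop two_pos Filter.tendsto_id
  have hLtend : Filter.Tendsto (fun t : ℝ => Real.log A / (2 * t) - m)
      Filter.atTop (nhds (-m)) := by
    have := (Filter.Tendsto.div_atTop (tendsto_const_nhds (x := Real.log A)) h2t).sub_const m
    simpa using this
  have hUtend : Filter.Tendsto (fun t : ℝ => Real.log C / (2 * t) - m)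
      Filter.atTop (nhds (-m)) := by
    have := (Filter.Tendsto.div_atTop (tendsto_const_nhds (x := Real.log C)) h2t).sub_const m
    simpa using this
  refine tendsto_of_tendsto_of_tendsto_of_le_of_le' hLtend hUtend ?_ ?_
  · filter_upwards [Filter.eventually_ge_atTop (1 : ℝ)] with t ht
    have ht0 : (0:ℝ) < t := by linarith
    have heqn : Real.log (hnorm (c t) f) / t = Real.log (Q t) / (2 * t) := by
      rw [hnormQ t ht0.le, Real.log_sqrt (hQpos t).le, div_div]
    rw [heqn]
    have hlog : Real.log A + (-(2 * t) * m) ≤ Real.log (Q t) := by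
      have h1 := Real.log_le_log (mul_pos hA (Real.exp_pos _)) (hlow t)
      rwa [Real.log_mul hA.ne' (Real.exp_ne_zero _), Real.log_exp] at h1
    have h2tpos : (0:ℝ) < 2 * t := by linarith
    have hrw : Real.log A / (2 * t) - m = (Real.log A + (-(2 * t) * m)) / (2 * t) := by
      field_simp
      ring
    rw [hrw]
    exact (div_le_div_iff_of_pos_right h2tpos).mpr hlog
  · filter_upwards [Filter.eventually_ge_atTop (1 : ℝ)] with t ht
    have ht0 : (0:ℝ) < t := by linarith
    have heqn : Real.log (hnorm (c t) f) / t = Real.log (Q t) / (2 * t) := by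
      rw [hnormQ t ht0.le, Real.log_sqrt (hQpos t).le, div_div]
    rw [heqn]
    have hlog : Real.log (Q t) ≤ Real.log C + (-(2 * t) * m) := by
      have h1 := Real.log_le_log (hQpos t) (hup t ht0.le)
      rwa [Real.log_mul hC.ne' (Real.exp_ne_zero _), Real.log_exp] at h1
    have h2tpos : (0:ℝ) < 2 * t := by linarith
    have hrw : Real.log C / (2 * t) - m = (Real.log C + (-(2 * t) * m)) / (2 * t) := by
      field_simp
      ring
    rw [hrw]
    exact (div_le_div_iff_of_pos_right h2tpos).mpr hlog


end
end

section
/- (Non-Archimedean interpolation theorem of Stein–Weiss.) Let V be a finite-dimensional complex vector space, π : V → Q a surjective linear map onto a complex vector space Q, H₀ a Hermitian norm on V, H₁ a Hermitian norm on Q, 𝓕 a filtration on V and 𝓖 a filtration on Q. Assume [H₀] ≥ H₁ (the quotient norm of H₀ dominates H₁ pointwise on Q) and [χ_𝓕] ≥ χ_𝓖 (the quotient of the non-Archimedean norm χ_𝓕 dominates χ_𝓖 pointwise on Q). Let H_t^𝓕 (t ≥ 0) be the geodesic ray of Hermitian norms on V associated with 𝓕 emanating from H₀, and H_t^𝓖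 the geodesic ray on Q associated with 𝓖 emanating from H₁, both constructed via adapted orthonormal bases. Then for every t ≥ 0 the quotient norm of H_t^𝓕 dominates H_t^𝓖: for all q ∈ Q, inf{‖v‖_{H_t^𝓕} : v ∈ V, π(v) = q} ≥ ‖q‖_{H_t^𝓖}. -/
open scoped BigOperators
open Filter Classical

noncomputable section

variable {V : Type*} [AddCommGroup V] [Module ℂ V]

/-- The quotient norm of a function `N` on `V` along a surjective linear map `π : V → Q`. -/
def quotNorm {V Q : Type*} [AddCommGroup V] [Module ℂ V] [AddCommGroup Q] [Module ℂ Q]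
    (π : V →ₗ[ℂ] Q) (N : V → ℝ) : Q → ℝ :=
  fun q => sInf {r : ℝ | ∃ v : V, π v = q ∧ r = N v}

namespace SW

section InnerLemmas
variable {V : Type*} [AddCommGroup V] [Module ℂ V]

lemma inner_sum_left (c : InnerProductSpace.Core ℂ V) {ι : Type*} [Fintype ι] (g : ι → V) (y : V) :
    c.inner (∑ i, g i) y = ∑ i, c.inner (g i) y :=
  map_sum (AddMonoidHom.mk' (fun x => c.inner x y) (fun a b => c.add_left a b y)) g Finset.univ

lemma inner_smul_right (c : InnerProductSpace.Core ℂ V) (r : ℂ) (x y : V) :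
    c.inner x (r • y) = r * c.inner x y := by
  calc c.inner x (r • y) = (starRingEnd ℂ) (c.inner (r • y) x) := (c.conj_inner_symm x (r • y)).symm
    _ = (starRingEnd ℂ) ((starRingEnd ℂ) r * c.inner y x) := by rw [c.smul_left]
    _ = r * (starRingEnd ℂ) (c.inner y x) := by simp
    _ = r * c.inner x y := by rw [c.conj_inner_symm]

lemma inner_add_right (c : InnerProductSpace.Core ℂ V) (x y z : V) :
    c.inner x (y + z) = c.inner x y + c.inner x z := by
  calc c.inner x (y + z) = (starRingEnd ℂ) (c.inner (y + z) x) := (c.conj_inner_symm x _).symm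
    _ = (starRingEnd ℂ) (c.inner y x + c.inner z x) := by rw [c.add_left]
    _ = (starRingEnd ℂ) (c.inner y x) + (starRingEnd ℂ) (c.inner z x) := by rw [map_add]
    _ = c.inner x y + c.inner x z := by rw [c.conj_inner_symm, c.conj_inner_symm]

lemma inner_sum_right (c : InnerProductSpace.Core ℂ V) {ι : Type*} [Fintype ι] (g : ι → V)
    (y : V) : c.inner y (∑ i, g i) = ∑ i, c.inner y (g i) :=
  map_sum (AddMonoidHom.mk' (fun x => c.inner y x) (fun a b => inner_add_right c y a b)) g
    Finset.univ

/-- Norm formula for a basis whose exponential rescaling is orthonormal. -/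
lemma hnorm_formula (c : InnerProductSpace.Core ℂ V) {n : ℕ} (b : Module.Basis (Fin n) ℂ V)
    (w : Fin n → ℝ)
    (h : ∀ i j, c.inner (Real.exp (w i) • b i) (Real.exp (w j) • b j)
        = if i = j then 1 else 0) (v : V) :
    hnorm c v = Real.sqrt (∑ i, Complex.normSq (b.repr v i) * Real.exp (-(2 * w i))) := by
  have hne : ∀ i : Fin n, (Real.exp (w i) : ℂ) ≠ 0 :=
    fun i => Complex.ofReal_ne_zero.mpr (Real.exp_ne_zero _)
  have hbb : ∀ i j, c.inner (b i) (b j)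
      = if i = j then (Real.exp (-(2 * w i)) : ℂ) else 0 := by
    intro i j
    have hij := h i j
    rw [← Complex.coe_smul, ← Complex.coe_smul] at hij
    rw [c.smul_left, inner_smul_right, Complex.conj_ofReal] at hij
    by_cases e : i = j
    · subst e; rw [if_pos rfl] at hij ⊢
      have key : (Real.exp (w i) : ℂ) * ((Real.exp (w i) : ℂ) * (Real.exp (-(2 * w i)) : ℂ))
          = 1 := by
        have kR : Real.exp (w i) * (Real.exp (w i) * Real.exp (-(2 * w i))) = 1 := by
          rw [← Real.exp_add, ← Real.exp_add, show w i + (w i + -(2 * w i)) = 0 by ring,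
            Real.exp_zero]
        rw [← Complex.ofReal_mul, ← Complex.ofReal_mul, kR, Complex.ofReal_one]
      have h2 := hij.trans key.symm
      exact mul_left_cancel₀ (hne i) (mul_left_cancel₀ (hne i) h2)
    · rw [if_neg e] at hij ⊢
      exact (mul_eq_zero.1 ((mul_eq_zero.1 hij).resolve_left (hne i))).resolve_left (hne j)
  have hexp : c.inner v v
      = ((∑ i, Complex.normSq (b.repr v i) * Real.exp (-(2 * w i)) : ℝ) : ℂ) := by
    conv_lhs => rw [← b.sum_repr v]
    rw [inner_sum_left]
    have step : ∀ i, c.inner ((b.repr v i) • b i) (∑ j, (b.repr v j) • b j)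
        = ((Complex.normSq (b.repr v i) * Real.exp (-(2 * w i)) : ℝ) : ℂ) := by
      intro i
      rw [inner_sum_right]
      have term : ∀ j, c.inner ((b.repr v i) • b i) ((b.repr v j) • b j)
          = if i = j then ((Complex.normSq (b.repr v i) * Real.exp (-(2 * w i)) : ℝ) : ℂ)
            else 0 := by
        intro j
        rw [c.smul_left, inner_smul_right, hbb i j]
        by_cases e : i = j
        · subst e
          rw [if_pos rfl, if_pos rfl, ← mul_assoc, ← Complex.normSq_eq_conj_mul_self,
            Complex.ofReal_mul]
        · rw [if_neg e, if_neg e]; ring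
      rw [Finset.sum_congr rfl (fun j _ => term j)]
      simp
    rw [Finset.sum_congr rfl (fun i _ => step i), ← Complex.ofReal_sum]
  unfold hnorm
  rw [hexp, Complex.ofReal_re]

end InnerLemmas

lemma sq_le_of_sqrt_le {a b : ℝ} (ha : 0 ≤ a) (hb : 0 ≤ b) (h : Real.sqrt a ≤ Real.sqrt b) :
    a ≤ b := by
  have := mul_le_mul h h (Real.sqrt_nonneg a) (Real.sqrt_nonneg b)
  rwa [Real.mul_self_sqrt ha, Real.mul_self_sqrt hb] at this

lemma cs {m : ℕ} (u w : Fin m → ℂ) :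
    ‖∑ j, (starRingEnd ℂ) (u j) * w j‖
      ≤ Real.sqrt (∑ j, Complex.normSq (u j)) * Real.sqrt (∑ j, Complex.normSq (w j)) := by
  let U : EuclideanSpace ℂ (Fin m) := WithLp.toLp 2 u
  let W : EuclideanSpace ℂ (Fin m) := WithLp.toLp 2 w
  have h1 : (inner ℂ U W : ℂ) = ∑ j, (starRingEnd ℂ) (u j) * w j := by
    simp [PiLp.inner_apply, RCLike.inner_apply, U, W]
    exact Finset.sum_congr rfl fun j _ => mul_comm _ _
  have h2 := norm_inner_le_norm (𝕜 := ℂ) U W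
  rw [h1] at h2
  have hU : ‖U‖ = Real.sqrt (∑ j, Complex.normSq (u j)) := by
    rw [EuclideanSpace.norm_eq]
    congr 1
    refine Finset.sum_congr rfl fun j _ => ?_
    rw [Complex.sq_norm]
  have hW : ‖W‖ = Real.sqrt (∑ j, Complex.normSq (w j)) := by
    rw [EuclideanSpace.norm_eq]
    congr 1
    refine Finset.sum_congr rfl fun j _ => ?_
    rw [Complex.sq_norm]
  rw [hU, hW] at h2
  simpa using h2

/-- The key interpolation inequality, proved by Phragmén–Lindelöf. -/
lemma keyC {n m : ℕ} (P : Fin m → Fin n → ℂ) (e : Fin n → ℝ) (f : Fin m → ℝ)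
    (hsupp : ∀ j i, P j i ≠ 0 → e i ≤ f j)
    (h0 : ∀ x : Fin n → ℂ, ∑ j, Complex.normSq (∑ i, P j i * x i) ≤ ∑ i, Complex.normSq (x i))
    {t : ℝ} (ht : 0 ≤ t) (x : Fin n → ℂ) :
    ∑ j, Complex.normSq (∑ i, P j i * Complex.exp ((t : ℂ) * ((e i : ℝ) - f j)) * x i)
      ≤ ∑ i, Complex.normSq (x i) := by
  classical
  set y : Fin m → ℂ :=
    fun j => ∑ i, P j i * Complex.exp ((t : ℂ) * ((e i : ℝ) - f j)) * x i with hy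
  set S : ℝ := ∑ j, Complex.normSq (y j) with hS
  have hS0 : 0 ≤ S := Finset.sum_nonneg fun j _ => Complex.normSq_nonneg _
  have hX0 : 0 ≤ ∑ i, Complex.normSq (x i) := Finset.sum_nonneg fun i _ => Complex.normSq_nonneg _
  set X : ℝ := Real.sqrt (∑ i, Complex.normSq (x i)) with hXdef
  set Y : ℝ := Real.sqrt S with hYdef
  set g : ℂ → ℂ := fun z => ∑ j, ∑ i,
    ((starRingEnd ℂ) (y j) * P j i * x i) * Complex.exp (z * ((e i : ℝ) - f j)) with hg
  have hdiff : Differentiable ℂ g := by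
    apply Differentiable.fun_sum; intro j _
    apply Differentiable.fun_sum; intro i _
    exact (differentiable_const _).mul ((differentiable_id.mul_const _).cexp)
  have hgt : g (t : ℂ) = (S : ℂ) := by
    rw [hg]
    simp only
    have : ∀ j, (∑ i, ((starRingEnd ℂ) (y j) * P j i * x i)
        * Complex.exp ((t : ℂ) * ((e i : ℝ) - f j))) = (Complex.normSq (y j) : ℂ) := by
      intro j
      have : (∑ i, ((starRingEnd ℂ) (y j) * P j i * x i)
          * Complex.exp ((t : ℂ) * ((e i : ℝ) - f j)))
          = (starRingEnd ℂ) (y j)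
            * ∑ i, P j i * Complex.exp ((t : ℂ) * ((e i : ℝ) - f j)) * x i := by
        rw [Finset.mul_sum]
        exact Finset.sum_congr rfl fun i _ => by ring
      rw [this]
      exact (Complex.normSq_eq_conj_mul_self (z := y j)).symm
    rw [Finset.sum_congr rfl fun j _ => this j, ← Complex.ofReal_sum]
  set C0 : ℝ := ∑ j, ∑ i, ‖(starRingEnd ℂ) (y j) * P j i * x i‖ with hC0
  have hbound : ∀ z : ℂ, 0 ≤ z.re → ‖g z‖ ≤ C0 := by
    intro z hz
    refine le_trans (norm_sum_le _ _) ?_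
    refine Finset.sum_le_sum fun j _ => le_trans (norm_sum_le _ _)
      (Finset.sum_le_sum fun i _ => ?_)
    rw [norm_mul]
    by_cases hP : P j i = 0
    · simp [hP]
    · have hle : e i - f j ≤ 0 := sub_nonpos.mpr (hsupp j i hP)
      have : ‖Complex.exp (z * ((e i : ℝ) - f j))‖ ≤ 1 := by
        rw [Complex.norm_exp]
        apply Real.exp_le_one_iff.mpr
        have : (z * ((e i : ℝ) - f j)).re = z.re * (e i - f j) := by
          rw [← Complex.ofReal_sub, Complex.mul_re]
          simp
        rw [this]
        exact mul_nonpos_of_nonneg_of_nonpos hz hle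
      calc ‖(starRingEnd ℂ) (y j) * P j i * x i‖ * ‖Complex.exp (z * ((e i : ℝ) - f j))‖
          ≤ ‖(starRingEnd ℂ) (y j) * P j i * x i‖ * 1 :=
            mul_le_mul_of_nonneg_left this (norm_nonneg _)
        _ = ‖(starRingEnd ℂ) (y j) * P j i * x i‖ := by
            rw [mul_one]
  have him : ∀ s : ℝ, ‖g ((s : ℂ) * Complex.I)‖ ≤ Y * X := by
    intro s
    have hguw : g ((s : ℂ) * Complex.I)
        = ∑ j, (starRingEnd ℂ) (y j * Complex.exp ((s : ℂ) * Complex.I * (f j)))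
            * (∑ i, P j i * (Complex.exp ((s : ℂ) * Complex.I * (e i)) * x i)) := by
      rw [hg]
      simp only
      refine Finset.sum_congr rfl fun j _ => ?_
      rw [map_mul, ← Complex.exp_conj]
      have h1 : (starRingEnd ℂ) ((s : ℂ) * Complex.I * (f j))
          = -((s : ℂ) * Complex.I * (f j)) := by
        rw [map_mul, map_mul, Complex.conj_ofReal, Complex.conj_ofReal, Complex.conj_I]
        ring
      rw [h1, Finset.mul_sum]
      refine Finset.sum_congr rfl fun i _ => ?_
      have hsplit : (s : ℂ) * Complex.I * ((e i : ℝ) - (f j) : ℂ)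
          = (s : ℂ) * Complex.I * (e i) + -((s : ℂ) * Complex.I * (f j)) := by
        ring
      rw [hsplit, Complex.exp_add]
      ring
    rw [hguw]
    refine le_trans (cs _ _) ?_
    have hre0 : ∀ r : ℝ, ((s : ℂ) * Complex.I * (r : ℂ)).re = 0 := by
      intro r
      have : (s : ℂ) * Complex.I * (r : ℂ) = ((s * r : ℝ) : ℂ) * Complex.I := by
        push_cast; ring
      rw [this, Complex.mul_I_re]
      simp
    have hnsq : ∀ r : ℝ, Complex.normSq (Complex.exp ((s : ℂ) * Complex.I * (r : ℂ))) = 1 := by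
      intro r
      rw [Complex.normSq_eq_norm_sq, Complex.norm_exp, hre0 r]
      simp
    have hU : Real.sqrt (∑ j, Complex.normSq (y j * Complex.exp ((s : ℂ) * Complex.I * (f j))))
        = Y := by
      rw [hYdef, hS]
      congr 1
      refine Finset.sum_congr rfl fun j _ => ?_
      rw [Complex.normSq_mul, hnsq, mul_one]
    have hW : Real.sqrt (∑ j, Complex.normSq
        (∑ i, P j i * (Complex.exp ((s : ℂ) * Complex.I * (e i)) * x i))) ≤ X := by
      rw [hXdef]
      apply Real.sqrt_le_sqrt
      refine le_trans (h0 (fun i => Complex.exp ((s : ℂ) * Complex.I * (e i)) * x i)) ?_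
      apply le_of_eq
      refine Finset.sum_congr rfl fun i _ => ?_
      rw [Complex.normSq_mul, hnsq, one_mul]
    rw [hU]
    exact mul_le_mul_of_nonneg_left hW (Real.sqrt_nonneg _)
  have hPL : ‖g (t : ℂ)‖ ≤ Y * X := by
    have := PhragmenLindelof.right_half_plane_of_bounded_on_real
      (f := g) (C := Y * X) (z := (t : ℂ))
      (hdiff.diffContOnCl)
      ⟨1, one_lt_two, 0, by
        apply Asymptotics.IsBigO.of_bound C0
        rw [Filter.eventually_inf_principal]
        refine Filter.Eventually.of_forall fun z hz => ?_
        have : ‖Real.exp (0 * ‖z‖ ^ (1:ℝ))‖ = 1 := by simp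
        rw [this, mul_one]
        exact hbound z (le_of_lt hz)⟩
      ⟨C0, by
        rw [Filter.eventually_map]
        filter_upwards [Filter.eventually_ge_atTop (0:ℝ)] with s hs
        exact hbound (s : ℂ) (by simpa using hs)⟩
      him
      (by simpa using ht)
    simpa using this
  rw [hgt] at hPL
  have hSle : S ≤ Y * X := by
    rw [Complex.norm_real, Real.norm_eq_abs, abs_of_nonneg hS0] at hPL
    exact hPL
  rcases eq_or_lt_of_le hS0 with hS0' | hS0'
  · rw [← hS0']; exact hX0
  · have hYX : Y ≤ X := by
      have hSq : S = Y * Y := (Real.mul_self_sqrt hS0).symm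
      rw [hSq] at hSle
      have hY0 : 0 < Y := Real.sqrt_pos.mpr hS0'
      exact le_of_mul_le_mul_left hSle hY0
    have : S ≤ X * X := le_trans hSle (mul_le_mul_of_nonneg_right hYX (Real.sqrt_nonneg _))
    rw [Real.mul_self_sqrt hX0] at this
    exact this

section Filtration
variable {Q : Type*} [AddCommGroup Q] [Module ℂ Q]

lemma le_filtWeight (F : ℝ → Submodule ℂ Q) (hF : IsVSFiltration F) {v : Q} {l : ℝ}
    (hv : v ≠ 0) (h : v ∈ F l) : l ≤ filtWeight F v := by
  obtain ⟨t₁, h₁⟩ := hF.eventually_bot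
  refine le_csSup ⟨t₁, fun u hu => ?_⟩ h
  by_contra hlt
  push_neg at hlt
  have hbot : F u = ⊥ := h₁ u (le_of_lt hlt)
  rw [Set.mem_setOf_eq, hbot] at hu
  exact hv (Submodule.mem_bot ℂ |>.mp hu)

lemma mem_of_lt_filtWeight (F : ℝ → Submodule ℂ Q) (hF : IsVSFiltration F) {v : Q} {lam : ℝ}
    (h : lam < filtWeight F v) : v ∈ F lam := by
  obtain ⟨t₀, h₀⟩ := hF.eventually_top
  have hne : {l : ℝ | v ∈ F l}.Nonempty := ⟨t₀, by rw [Set.mem_setOf_eq, h₀ t₀ le_rfl]; trivial⟩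
  obtain ⟨l, hl, hlam⟩ := exists_lt_of_lt_csSup hne h
  exact hF.antitone (le_of_lt hlam) hl

lemma lam_le_jumpNum [FiniteDimensional ℂ Q] (G : ℝ → Submodule ℂ Q) (hG : IsVSFiltration G)
    {j : ℕ} (hj : 1 ≤ j) {lam : ℝ} (hrank : j ≤ Module.finrank ℂ (G lam)) :
    lam ≤ jumpNum G j := by
  obtain ⟨t₁, h₁⟩ := hG.eventually_bot
  refine le_csSup ⟨t₁, fun u hu => ?_⟩ hrank
  by_contra hlt
  push_neg at hlt
  have hbot : G u = ⊥ := h₁ u (le_of_lt hlt)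
  rw [Set.mem_setOf_eq, hbot, finrank_bot] at hu
  omega

/-- A filtration subspace is spanned by the adapted basis vectors of large weight. -/
lemma filt_le_span [FiniteDimensional ℂ Q] {m : ℕ} (G : ℝ → Submodule ℂ Q)
    (hG : IsVSFiltration G) (b : Module.Basis (Fin m) ℂ Q)
    (hb : ∀ j : Fin m, b j ∈ G (jumpNum G (j.1 + 1))) (lam : ℝ) :
    G lam ≤ Submodule.span ℂ (b '' {j : Fin m | lam ≤ jumpNum G (j.1 + 1)}) := by
  classical
  set Sset : Set (Fin m) := {j : Fin m | lam ≤ jumpNum G (j.1 + 1)} with hSset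
  set W : Submodule ℂ Q := Submodule.span ℂ (b '' Sset) with hW
  have hWle : W ≤ G lam := by
    rw [hW, Submodule.span_le]
    rintro q ⟨j, hj, rfl⟩
    exact hG.antitone hj (hb j)
  set k : ℕ := Module.finrank ℂ (G lam) with hk
  have hkm : k ≤ m := by
    have h1 := Submodule.finrank_le (G lam)
    rwa [Module.finrank_eq_card_basis b, Fintype.card_fin] at h1
  have hjk : ∀ j : Fin m, j.1 < k → j ∈ Sset := by
    intro j hjlt
    exact lam_le_jumpNum G hG (Nat.succ_le_succ (Nat.zero_le _)) (by omega)
  have hWrank : Module.finrank ℂ W = Fintype.card Sset := by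
    have hrange : Set.range (b ∘ (Subtype.val : Sset → Fin m)) = b '' Sset := by
      rw [Set.range_comp, Subtype.range_coe]
    have hli : LinearIndependent ℂ (b ∘ (Subtype.val : Sset → Fin m)) :=
      b.linearIndependent.comp _ Subtype.val_injective
    rw [hW, ← hrange]
    exact finrank_span_eq_card hli
  have hcard : k ≤ Fintype.card Sset := by
    have hinj : Function.Injective (fun i : Fin k => (⟨⟨i.1, lt_of_lt_of_le i.2 hkm⟩,
        hjk _ i.2⟩ : Sset)) := by
      intro a b h
      apply Fin.ext
      have := congrArg (fun x : Sset => (x.1 : ℕ)) h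
      simpa using this
    simpa using Fintype.card_le_of_injective _ hinj
  have : G lam = W := ((Submodule.eq_of_le_of_finrank_le hWle (by omega)).symm)
  exact le_of_eq this

lemma repr_eq_zero_of_mem_filt [FiniteDimensional ℂ Q] {m : ℕ} (G : ℝ → Submodule ℂ Q)
    (hG : IsVSFiltration G) (b : Module.Basis (Fin m) ℂ Q)
    (hb : ∀ j : Fin m, b j ∈ G (jumpNum G (j.1 + 1))) {lam : ℝ} {q : Q}
    (hq : q ∈ G lam) {j : Fin m} (hj : jumpNum G (j.1 + 1) < lam) :
    b.repr q j = 0 := by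
  have hmem := filt_le_span G hG b hb lam hq
  rw [Module.Basis.mem_span_image] at hmem
  by_contra h0
  have hsup : j ∈ (b.repr q).support := Finsupp.mem_support_iff.mpr h0
  have := hmem hsup
  rw [Set.mem_setOf_eq] at this
  exact absurd hj (not_lt.mpr this)

end Filtration

end SW

/-- non-Archimedean interpolation theorem of Stein–Weiss: if the quotient of
`H₀` dominates `H₁` and the quotient of `χ_𝓕` dominates `χ_𝓖`, then for every `t ≥ 0` the
quotient of `H_t^𝓕` dominates `H_t^𝓖`. -/
theorem nonarchimedean_stein_weiss
    {V Q : Type*} [AddCommGroup V] [Module ℂ V] [FiniteDimensional ℂ V]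
    [AddCommGroup Q] [Module ℂ Q] [FiniteDimensional ℂ Q]
    (π : V →ₗ[ℂ] Q) (hπ : Function.Surjective π)
    {n m : ℕ} (F : ℝ → Submodule ℂ V) (hF : IsVSFiltration F)
    (G : ℝ → Submodule ℂ Q) (hG : IsVSFiltration G)
    (bV : Module.Basis (Fin n) ℂ V) (cV : ℝ → InnerProductSpace.Core ℂ V)
    (bQ : Module.Basis (Fin m) ℂ Q) (cQ : ℝ → InnerProductSpace.Core ℂ Q)
    (hrayV : IsGeodesicRayFor F (⇑bV) cV) (hrayQ : IsGeodesicRayFor G (⇑bQ) cQ)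
    (hdom_norm : ∀ q : Q, hnorm (cQ 0) q ≤ quotNorm π (hnorm (cV 0)) q)
    (hdom_chi : ∀ q : Q, filtChi G q ≤ quotNorm π (filtChi F) q) :
    ∀ t : ℝ, 0 ≤ t → ∀ q : Q, hnorm (cQ t) q ≤ quotNorm π (hnorm (cV t)) q := by
  classical
  obtain ⟨honV, hadV, hscV⟩ := hrayV
  obtain ⟨honQ, hadQ, hscQ⟩ := hrayQ
  -- norm formulas along the rays
  have hVformula : ∀ t : ℝ, 0 ≤ t → ∀ v : V, hnorm (cV t) v
      = Real.sqrt (∑ i, Complex.normSq (bV.repr v i)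
          * Real.exp (-(2 * (t * jumpNum F (i.1 + 1))))) := by
    intro t ht v
    exact SW.hnorm_formula (cV t) bV (fun i => t * jumpNum F (i.1 + 1))
      (fun i j => hscV t ht i j) v
  have hQformula : ∀ t : ℝ, 0 ≤ t → ∀ q : Q, hnorm (cQ t) q
      = Real.sqrt (∑ j, Complex.normSq (bQ.repr q j)
          * Real.exp (-(2 * (t * jumpNum G (j.1 + 1))))) := by
    intro t ht q
    exact SW.hnorm_formula (cQ t) bQ (fun j => t * jumpNum G (j.1 + 1))
      (fun i j => hscQ t ht i j) q
  -- coordinates of the image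
  have hrepr : ∀ (v : V) (j : Fin m),
      bQ.repr (π v) j = ∑ i, bV.repr v i * bQ.repr (π (bV i)) j := by
    intro v j
    have hLv : ∀ u : V,
        ((Finsupp.lapply j).comp ((bQ.repr : Q →ₗ[ℂ] (Fin m →₀ ℂ)).comp π)) u
          = bQ.repr (π u) j := fun u => rfl
    rw [← hLv v]
    conv_lhs => rw [← bV.sum_repr v, map_sum]
    refine Finset.sum_congr rfl fun i _ => ?_
    rw [map_smul, hLv, smul_eq_mul]
  -- contraction at time 0, in coordinates
  have h0 : ∀ x : Fin n → ℂ,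
      ∑ j, Complex.normSq (∑ i, bQ.repr (π (bV i)) j * x i)
        ≤ ∑ i, Complex.normSq (x i) := by
    intro x
    set v0 : V := bV.equivFun.symm x with hv0
    have hrx : ∀ i, bV.repr v0 i = x i := by
      intro i
      have h1 : bV.equivFun v0 = x := bV.equivFun.apply_symm_apply x
      have h2 := congrFun h1 i
      rwa [Module.Basis.equivFun_apply] at h2
    have h1 := hdom_norm (π v0)
    have h2 : quotNorm π (hnorm (cV 0)) (π v0) ≤ hnorm (cV 0) v0 :=
      csInf_le ⟨0, by rintro r ⟨u, _, rfl⟩; exact Real.sqrt_nonneg _⟩ ⟨v0, rfl, rfl⟩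
    have h3 := le_trans h1 h2
    rw [hQformula 0 le_rfl (π v0), hVformula 0 le_rfl v0] at h3
    simp only [zero_mul, mul_zero, neg_zero, Real.exp_zero, mul_one] at h3
    have h4 := SW.sq_le_of_sqrt_le
      (Finset.sum_nonneg fun j _ => Complex.normSq_nonneg _)
      (Finset.sum_nonneg fun i _ => Complex.normSq_nonneg _) h3
    calc ∑ j, Complex.normSq (∑ i, bQ.repr (π (bV i)) j * x i)
        = ∑ j, Complex.normSq (bQ.repr (π v0) j) := by
          refine Finset.sum_congr rfl fun j _ => ?_
          rw [hrepr v0 j]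
          congr 1
          exact Finset.sum_congr rfl fun i _ => by rw [hrx i, mul_comm]
      _ ≤ ∑ i, Complex.normSq (bV.repr v0 i) := h4
      _ = ∑ i, Complex.normSq (x i) := Finset.sum_congr rfl fun i _ => by rw [hrx i]
  -- support condition from the non-Archimedean domination
  have hsupp : ∀ (j : Fin m) (i : Fin n), bQ.repr (π (bV i)) j ≠ 0 →
      jumpNum F (i.1 + 1) ≤ jumpNum G (j.1 + 1) := by
    intro j i hPne
    have hbne : bV i ≠ 0 := bV.ne_zero i
    have hπne : π (bV i) ≠ 0 := by
      intro h
      apply hPne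
      rw [h]
      simp
    have hwF : jumpNum F (i.1 + 1) ≤ filtWeight F (bV i) :=
      SW.le_filtWeight F hF hbne (hadV i)
    have hchain : Real.exp (-(filtWeight G (π (bV i))))
        ≤ Real.exp (-(jumpNum F (i.1 + 1))) := by
      have h1 := hdom_chi (π (bV i))
      have hlb : ∀ r ∈ {r : ℝ | ∃ v : V, π v = π (bV i) ∧ r = filtChi F v}, (0:ℝ) ≤ r := by
        rintro r ⟨u, _, rfl⟩
        unfold filtChi
        split
        · exact le_rfl
        · exact (Real.exp_pos _).le
      have h2 : quotNorm π (filtChi F) (π (bV i)) ≤ filtChi F (bV i) :=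
        csInf_le ⟨0, hlb⟩ ⟨bV i, rfl, rfl⟩
      have h3 := le_trans h1 h2
      unfold filtChi at h3
      rw [if_neg hπne, if_neg hbne] at h3
      exact le_trans h3 (Real.exp_le_exp.mpr (neg_le_neg hwF))
    have hwG : jumpNum F (i.1 + 1) ≤ filtWeight G (π (bV i)) := by
      have := Real.exp_le_exp.mp hchain
      linarith
    by_contra hclt
    push_neg at hclt
    obtain ⟨lam, hl1, hl2⟩ := exists_between hclt
    have hmem : π (bV i) ∈ G lam :=
      SW.mem_of_lt_filtWeight G hG (lt_of_lt_of_le hl2 hwG)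
    exact hPne (SW.repr_eq_zero_of_mem_filt G hG bQ hadQ hmem hl1)
  -- main pointwise inequality
  intro t ht q
  have key : ∀ v : V, hnorm (cQ t) (π v) ≤ hnorm (cV t) v := by
    intro v
    rw [hVformula t ht v, hQformula t ht (π v)]
    apply Real.sqrt_le_sqrt
    have hkey := SW.keyC (fun j i => bQ.repr (π (bV i)) j)
      (fun i => jumpNum F (i.1 + 1)) (fun j => jumpNum G (j.1 + 1)) hsupp h0 ht
      (fun i => (Real.exp (-(t * jumpNum F (i.1 + 1))) : ℂ) * bV.repr v i)
    have hexp2 : ∀ r : ℝ, Real.exp (-(t * r)) * Real.exp (-(t * r))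
        = Real.exp (-(2 * (t * r))) := by
      intro r
      rw [← Real.exp_add]
      congr 1
      ring
    have hB : ∑ i, Complex.normSq (bV.repr v i) * Real.exp (-(2 * (t * jumpNum F (i.1 + 1))))
        = ∑ i, Complex.normSq
            ((Real.exp (-(t * jumpNum F (i.1 + 1))) : ℂ) * bV.repr v i) := by
      refine Finset.sum_congr rfl fun i _ => ?_
      rw [Complex.normSq_mul, Complex.normSq_ofReal, hexp2]
      ring
    have hA : ∑ j, Complex.normSq (bQ.repr (π v) j)
          * Real.exp (-(2 * (t * jumpNum G (j.1 + 1))))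
        = ∑ j, Complex.normSq (∑ i, bQ.repr (π (bV i)) j
            * Complex.exp ((t : ℂ) * ((jumpNum F (i.1 + 1) : ℝ) - jumpNum G (j.1 + 1)))
            * ((Real.exp (-(t * jumpNum F (i.1 + 1))) : ℂ) * bV.repr v i)) := by
      refine Finset.sum_congr rfl fun j _ => ?_
      have hsum : ∑ i, bQ.repr (π (bV i)) j
            * Complex.exp ((t : ℂ) * ((jumpNum F (i.1 + 1) : ℝ) - jumpNum G (j.1 + 1)))
            * ((Real.exp (-(t * jumpNum F (i.1 + 1))) : ℂ) * bV.repr v i)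
          = (Real.exp (-(t * jumpNum G (j.1 + 1))) : ℂ)
            * ∑ i, bV.repr v i * bQ.repr (π (bV i)) j := by
        rw [Finset.mul_sum]
        refine Finset.sum_congr rfl fun i _ => ?_
        have hE : Complex.exp ((t : ℂ)
              * ((jumpNum F (i.1 + 1) : ℝ) - jumpNum G (j.1 + 1)))
              * (Real.exp (-(t * jumpNum F (i.1 + 1))) : ℂ)
            = (Real.exp (-(t * jumpNum G (j.1 + 1))) : ℂ) := by
          rw [Complex.ofReal_exp, Complex.ofReal_exp, ← Complex.exp_add]
          congr 1
          push_cast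
          ring
        calc bQ.repr (π (bV i)) j
              * Complex.exp ((t : ℂ) * ((jumpNum F (i.1 + 1) : ℝ) - jumpNum G (j.1 + 1)))
              * ((Real.exp (-(t * jumpNum F (i.1 + 1))) : ℂ) * bV.repr v i)
            = (Complex.exp ((t : ℂ)
                * ((jumpNum F (i.1 + 1) : ℝ) - jumpNum G (j.1 + 1)))
                * (Real.exp (-(t * jumpNum F (i.1 + 1))) : ℂ))
              * (bV.repr v i * bQ.repr (π (bV i)) j) := by ring
          _ = (Real.exp (-(t * jumpNum G (j.1 + 1))) : ℂ)
              * (bV.repr v i * bQ.repr (π (bV i)) j) := by rw [hE]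
      rw [hsum, ← hrepr v j, Complex.normSq_mul, Complex.normSq_ofReal, hexp2]
      ring
    rw [hA, hB]
    exact hkey
  refine le_csInf ?_ ?_
  · obtain ⟨v0, hv0⟩ := hπ q
    exact ⟨hnorm (cV t) v0, v0, hv0, rfl⟩
  · rintro r ⟨v, hv, rfl⟩
    rw [← hv]
    exact key v

end
end

section
/- Let V be an n-dimensional complex vector space (n ≥ 1) and let H₀, H₁ be Hermitian norms on V that are both diagonalized by a common basis e₁,…,e_n (the basis is orthogonal for both inner products). Then for every p ∈ [1,∞): d_p(H₀, H₁)^p = d_p(H₀, H₀ ∨ H₁)^p + d_p(H₁, H₀ ∨ H₁)^p. -/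
open scoped BigOperators
open Filter Classical

noncomputable section

variable {V : Type*} [AddCommGroup V] [Module ℂ V]

/-- A filtration on a complex vector space `V`: a left-continuous, decreasing family of
subspaces which equals `⊤` for `t` small enough and `⊥` for `t` large enough. -/
structure IsFiltration' (F : ℝ → Submodule ℂ V) : Prop where
  antitone : ∀ ⦃s t : ℝ⦄, s ≤ t → F t ≤ F s
  left_cont : ∀ t : ℝ, ∃ ε > 0, ∀ δ : ℝ, 0 < δ → δ < ε → F (t - δ) = F t
  eventually_top : ∃ t₀ : ℝ, ∀ t ≤ t₀, F t = ⊤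
  eventually_bot : ∃ t₁ : ℝ, ∀ t, t₁ ≤ t → F t = ⊥

/-! ### Auxiliary lemmas -/

section AuxLemmas

lemma hnorm_nonneg' (c : InnerProductSpace.Core ℂ V) (w : V) : 0 ≤ hnorm c w :=
  Real.sqrt_nonneg _

lemma hnorm_pos' (c : InnerProductSpace.Core ℂ V) {w : V} (hw : w ≠ 0) : 0 < hnorm c w := by
  letI : InnerProductSpace.Core ℂ V := c
  letI : NormedAddCommGroup V := InnerProductSpace.Core.toNormedAddCommGroup (𝕜 := ℂ)
  exact norm_pos_iff.2 hw

lemma hnorm_sq_repr (c : InnerProductSpace.Core ℂ V) {n : ℕ} (e : Module.Basis (Fin n) ℂ V)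
    (he : OrthogonalFor c ⇑e) (w : V) :
    hnorm c w ^ 2 = ∑ i, ‖e.repr w i‖ ^ 2 * hnorm c (e i) ^ 2 := by
  letI : InnerProductSpace.Core ℂ V := c
  letI : NormedAddCommGroup V := InnerProductSpace.Core.toNormedAddCommGroup (𝕜 := ℂ)
  letI : InnerProductSpace ℂ V := InnerProductSpace.ofCore c.toCore
  have hn : ∀ v : V, hnorm c v = ‖v‖ := fun v => rfl
  have hi : ∀ x y : V, inner ℂ x y = c.inner x y := fun x y => rfl
  have key : inner ℂ w w = ((∑ i, ‖e.repr w i‖ ^ 2 * ‖e i‖ ^ 2 : ℝ) : ℂ) := by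
    conv_lhs => rw [← e.sum_repr w]
    rw [sum_inner]
    push_cast
    refine Finset.sum_congr rfl fun i _ => ?_
    rw [inner_sum, Finset.sum_eq_single i]
    · rw [inner_smul_left, inner_smul_right, inner_self_eq_norm_sq_to_K, ← mul_assoc,
        RCLike.conj_mul]
      norm_cast
    · intro j _ hj
      rw [inner_smul_left, inner_smul_right, hi, he i j fun h => hj h.symm, mul_zero, mul_zero]
    · intro h; exact absurd (Finset.mem_univ i) h
  have h2 := congrArg Complex.re key
  rw [Complex.ofReal_re] at h2
  simp only [hn]
  rw [InnerProductSpace.norm_sq_eq_re_inner (𝕜 := ℂ)]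
  simpa using h2

lemma log_ratio_le (c₀ c₁ : InnerProductSpace.Core ℂ V) {n : ℕ} (e : Module.Basis (Fin n) ℂ V)
    (he₀ : OrthogonalFor c₀ ⇑e) (he₁ : OrthogonalFor c₁ ⇑e) (s : Finset (Fin n)) (t : ℝ)
    (hs : ∀ i ∈ s, hnorm c₁ (e i) ≤ Real.exp t * hnorm c₀ (e i))
    {w : V} (hw : w ∈ Submodule.span ℂ (⇑e '' ↑s)) (hw0 : w ≠ 0) :
    Real.log (hnorm c₁ w / hnorm c₀ w) ≤ t := by
  have h0 := hnorm_pos' c₀ hw0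
  have h1 := hnorm_pos' c₁ hw0
  have hsupp : ∀ i, e.repr w i ≠ 0 → i ∈ s := by
    have h := (Module.Basis.mem_span_image (b := e)).1 hw
    intro i hi; exact h (Finsupp.mem_support_iff.2 hi)
  have hsq : hnorm c₁ w ^ 2 ≤ Real.exp t ^ 2 * hnorm c₀ w ^ 2 := by
    rw [hnorm_sq_repr c₁ e he₁ w, hnorm_sq_repr c₀ e he₀ w, Finset.mul_sum]
    refine Finset.sum_le_sum fun i _ => ?_
    by_cases hri : e.repr w i = 0
    · simp [hri]
    · have hle := hs i (hsupp i hri)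
      have h2 : hnorm c₁ (e i) ^ 2 ≤ Real.exp t ^ 2 * hnorm c₀ (e i) ^ 2 := by
        rw [← mul_pow]
        exact pow_le_pow_left₀ (hnorm_nonneg' _ _) hle 2
      calc ‖e.repr w i‖ ^ 2 * hnorm c₁ (e i) ^ 2
          ≤ ‖e.repr w i‖ ^ 2 * (Real.exp t ^ 2 * hnorm c₀ (e i) ^ 2) :=
            mul_le_mul_of_nonneg_left h2 (by positivity)
        _ = Real.exp t ^ 2 * (‖e.repr w i‖ ^ 2 * hnorm c₀ (e i) ^ 2) := by ring
  have hfin : hnorm c₁ w ≤ Real.exp t * hnorm c₀ w := by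
    have := Real.sqrt_le_sqrt hsq
    rwa [Real.sqrt_sq (hnorm_nonneg' _ _), ← mul_pow,
      Real.sqrt_sq (by positivity)] at this
  rw [Real.log_le_iff_le_exp (by positivity), div_le_iff₀ h0]
  linarith

lemma le_log_ratio (c₀ c₁ : InnerProductSpace.Core ℂ V) {n : ℕ} (e : Module.Basis (Fin n) ℂ V)
    (he₀ : OrthogonalFor c₀ ⇑e) (he₁ : OrthogonalFor c₁ ⇑e) (s : Finset (Fin n)) (t : ℝ)
    (hs : ∀ i ∈ s, Real.exp t * hnorm c₀ (e i) ≤ hnorm c₁ (e i))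
    {w : V} (hw : w ∈ Submodule.span ℂ (⇑e '' ↑s)) (hw0 : w ≠ 0) :
    t ≤ Real.log (hnorm c₁ w / hnorm c₀ w) := by
  have h0 := hnorm_pos' c₀ hw0
  have h1 := hnorm_pos' c₁ hw0
  have hsupp : ∀ i, e.repr w i ≠ 0 → i ∈ s := by
    have h := (Module.Basis.mem_span_image (b := e)).1 hw
    intro i hi; exact h (Finsupp.mem_support_iff.2 hi)
  have hsq : Real.exp t ^ 2 * hnorm c₀ w ^ 2 ≤ hnorm c₁ w ^ 2 := by
    rw [hnorm_sq_repr c₁ e he₁ w, hnorm_sq_repr c₀ e he₀ w, Finset.mul_sum]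
    refine Finset.sum_le_sum fun i _ => ?_
    by_cases hri : e.repr w i = 0
    · simp [hri]
    · have hle := hs i (hsupp i hri)
      have h2 : Real.exp t ^ 2 * hnorm c₀ (e i) ^ 2 ≤ hnorm c₁ (e i) ^ 2 := by
        rw [← mul_pow]
        exact pow_le_pow_left₀ (mul_nonneg (Real.exp_pos t).le (hnorm_nonneg' _ _)) hle 2
      calc Real.exp t ^ 2 * (‖e.repr w i‖ ^ 2 * hnorm c₀ (e i) ^ 2)
          = ‖e.repr w i‖ ^ 2 * (Real.exp t ^ 2 * hnorm c₀ (e i) ^ 2) := by ring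
        _ ≤ ‖e.repr w i‖ ^ 2 * hnorm c₁ (e i) ^ 2 :=
            mul_le_mul_of_nonneg_left h2 (by positivity)
  have hfin : Real.exp t * hnorm c₀ w ≤ hnorm c₁ w := by
    have := Real.sqrt_le_sqrt hsq
    rwa [← mul_pow, Real.sqrt_sq (by positivity),
      Real.sqrt_sq (hnorm_nonneg' _ _)] at this
  rw [Real.le_log_iff_exp_le (by positivity), le_div_iff₀ h0]
  linarith

lemma finrank_span_basis_finset {n : ℕ} (e : Module.Basis (Fin n) ℂ V) (s : Finset (Fin n)) :
    Module.finrank ℂ (Submodule.span ℂ (⇑e '' ↑s)) = s.card := by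
  have h : LinearIndependent ℂ (fun i : (s : Set (Fin n)) => e i) :=
    e.linearIndependent.comp _ Subtype.coe_injective
  have h2 := finrank_span_eq_card h
  rw [← Set.image_eq_range] at h2
  simpa using h2

lemma relSpec_diag {V : Type*} [AddCommGroup V] [Module ℂ V] [FiniteDimensional ℂ V]
    {n : ℕ} (hdim : Module.finrank ℂ V = n)
    (e : Module.Basis (Fin n) ℂ V) (c₀ c₁ : InnerProductSpace.Core ℂ V)
    (he₀ : OrthogonalFor c₀ ⇑e) (he₁ : OrthogonalFor c₁ ⇑e)
    (a : Fin n → ℝ) (ha : ∀ i, a i = Real.log (hnorm c₁ (e i) / hnorm c₀ (e i)))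
    (hmono : Antitone a) (j : Fin n) :
    relSpec (hnorm c₀) (hnorm c₁) (j.1 + 1) = a j := by
  have hne : ∀ i : Fin n, e i ≠ 0 := fun i => e.ne_zero i
  have hpos₀ : ∀ i, 0 < hnorm c₀ (e i) := fun i => hnorm_pos' c₀ (hne i)
  have hpos₁ : ∀ i, 0 < hnorm c₁ (e i) := fun i => hnorm_pos' c₁ (hne i)
  have hratio : ∀ i, hnorm c₁ (e i) = Real.exp (a i) * hnorm c₀ (e i) := by
    intro i
    rw [ha i, Real.exp_log (div_pos (hpos₁ i) (hpos₀ i)), div_mul_cancel₀]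
    exact (hpos₀ i).ne'
  have hn : 0 < n := j.pos
  set lo : Fin n := ⟨n - 1, by omega⟩ with hlo
  have hglob : ∀ w : V, w ≠ 0 → a lo ≤ Real.log (hnorm c₁ w / hnorm c₀ w) := by
    intro w hw0
    refine le_log_ratio c₀ c₁ e he₀ he₁ Finset.univ (a lo) (fun i _ => ?_) ?_ hw0
    · rw [hratio i]
      exact mul_le_mul_of_nonneg_right
        (Real.exp_le_exp.2 (hmono (Fin.mk_le_mk.2 (by omega)))) (hpos₀ i).le
    · rw [Finset.coe_univ, Set.image_univ, e.span_eq]; trivial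
  set S : Submodule ℂ V → Set ℝ :=
    fun W => {x : ℝ | ∃ w ∈ W, w ≠ 0 ∧ x = Real.log (hnorm c₁ w / hnorm c₀ w)} with hS
  have hbdd : ∀ W, BddBelow (S W) := by
    rintro W
    exact ⟨a lo, by rintro x ⟨w, _, hw0, rfl⟩; exact hglob w hw0⟩
  have hupper : ∀ r ∈ {r : ℝ | ∃ W : Submodule ℂ V, Module.finrank ℂ W = j.1 + 1 ∧
      r = sInf (S W)}, r ≤ a j := by
    rintro r ⟨W, hW, rfl⟩
    set U := Submodule.span ℂ (⇑e '' ↑(Finset.Ici j)) with hU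
    have hUrank : Module.finrank ℂ U = n - j.1 := by
      rw [hU, finrank_span_basis_finset, Fin.card_Ici]
    have hsum := Submodule.finrank_sup_add_finrank_inf_eq W U
    have hle : Module.finrank ℂ ↥(W ⊔ U) ≤ n := hdim ▸ Submodule.finrank_le _
    have hint : 0 < Module.finrank ℂ ↥(W ⊓ U) := by
      have hj := j.2
      omega
    obtain ⟨x, hx⟩ := Module.finrank_pos_iff_exists_ne_zero.1 hint
    have hx0 : (x : V) ≠ 0 := fun h => hx (Subtype.ext h)
    have hxW : (x : V) ∈ W := x.2.1
    have hxU : (x : V) ∈ U := x.2.2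
    have hbound : Real.log (hnorm c₁ x / hnorm c₀ x) ≤ a j := by
      refine log_ratio_le c₀ c₁ e he₀ he₁ (Finset.Ici j) (a j) (fun i hi => ?_) hxU hx0
      rw [hratio i]
      exact mul_le_mul_of_nonneg_right
        (Real.exp_le_exp.2 (hmono (Finset.mem_Ici.1 hi))) (hpos₀ i).le
    exact (csInf_le (hbdd W) ⟨x, hxW, hx0, rfl⟩).trans hbound
  have hmem : a j ∈ {r : ℝ | ∃ W : Submodule ℂ V, Module.finrank ℂ W = j.1 + 1 ∧
      r = sInf (S W)} := by
    refine ⟨Submodule.span ℂ (⇑e '' ↑(Finset.Iic j)), ?_, ?_⟩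
    · rw [finrank_span_basis_finset, Fin.card_Iic]
    · have hjmem : e j ∈ Submodule.span ℂ (⇑e '' ↑(Finset.Iic j)) :=
        Submodule.subset_span ⟨j, by simp, rfl⟩
      refine le_antisymm ?_ (csInf_le (hbdd _) ⟨e j, hjmem, hne j, (ha j)⟩)
      refine le_csInf ⟨_, ⟨e j, hjmem, hne j, rfl⟩⟩ ?_
      rintro x ⟨w, hwW, hw0, rfl⟩
      refine le_log_ratio c₀ c₁ e he₀ he₁ (Finset.Iic j) (a j) (fun i hi => ?_) hwW hw0
      rw [hratio i]
      exact mul_le_mul_of_nonneg_right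
        (Real.exp_le_exp.2 (hmono (Finset.mem_Iic.1 hi))) (hpos₀ i).le
  exact le_antisymm (csSup_le ⟨a j, hmem⟩ hupper) (le_csSup ⟨a j, hupper⟩ hmem)

lemma sum_relSpec_diag {V : Type*} [AddCommGroup V] [Module ℂ V] [FiniteDimensional ℂ V]
    {n : ℕ} (hdim : Module.finrank ℂ V = n)
    (e : Module.Basis (Fin n) ℂ V) (c₀ c₁ : InnerProductSpace.Core ℂ V)
    (he₀ : OrthogonalFor c₀ ⇑e) (he₁ : OrthogonalFor c₁ ⇑e) (g : ℝ → ℝ) :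
    ∑ j ∈ Finset.Icc 1 n, g (relSpec (hnorm c₀) (hnorm c₁) j) =
      ∑ i : Fin n, g (Real.log (hnorm c₁ (e i) / hnorm c₀ (e i))) := by
  set a : Fin n → ℝ := fun i => Real.log (hnorm c₁ (e i) / hnorm c₀ (e i)) with haa
  set σ : Equiv.Perm (Fin n) := Tuple.sort (fun i => -(a i)) with hσ
  have hmono : Antitone (a ∘ σ) := by
    intro i j hij
    have h := Tuple.monotone_sort (fun i => -(a i)) hij
    simpa using h
  set e' : Module.Basis (Fin n) ℂ V := e.reindex σ.symm with he'
  have hco : ⇑e' = ⇑e ∘ σ := by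
    rw [he', Module.Basis.coe_reindex]
    simp
  have hval : ∀ j : Fin n, relSpec (hnorm c₀) (hnorm c₁) (j.1 + 1) = a (σ j) := by
    intro j
    have h := relSpec_diag hdim e' c₀ c₁
      (by rw [hco]; exact fun i j hij => he₀ _ _ fun h => hij (σ.injective h))
      (by rw [hco]; exact fun i j hij => he₁ _ _ fun h => hij (σ.injective h))
      (a ∘ σ) (fun i => by rw [hco]; rfl) hmono j
    exact h
  have himg : Finset.Icc 1 n = (Finset.range n).image (fun i => i + 1) := by
    ext x
    simp only [Finset.mem_Icc, Finset.mem_image, Finset.mem_range]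
    constructor
    · rintro ⟨h1, h2⟩; exact ⟨x - 1, by omega, by omega⟩
    · rintro ⟨y, hy, rfl⟩; omega
  rw [himg, Finset.sum_image (by intro x _ y _ h; simp only at h; omega),
    ← Fin.sum_univ_eq_sum_range (fun k => g (relSpec (hnorm c₀) (hnorm c₁) (k + 1)))]
  calc ∑ i : Fin n, g (relSpec (hnorm c₀) (hnorm c₁) (i.1 + 1))
      = ∑ i : Fin n, (fun k => g (a k)) (σ i) := by
        refine Finset.sum_congr rfl fun i _ => ?_
        rw [hval i]
    _ = ∑ i : Fin n, g (a i) := Equiv.sum_comp σ (fun k => g (a k))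

lemma abs_rpow_split {p : ℝ} (hp : 1 ≤ p) (x : ℝ) :
    |x| ^ p = |max x 0| ^ p + |max (-x) 0| ^ p := by
  have hp0 : p ≠ 0 := by linarith
  rcases le_total x 0 with h | h
  · rw [max_eq_right h, max_eq_left (neg_nonneg.2 h), abs_zero, Real.zero_rpow hp0,
      abs_neg, zero_add]
  · rw [max_eq_left h, max_eq_right (neg_nonpos.2 h), abs_zero, Real.zero_rpow hp0, add_zero]

lemma log_max_div {x y : ℝ} (hx : 0 < x) (hy : 0 < y) :
    Real.log (max x y / x) = max (Real.log (y / x)) 0 := by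
  rcases le_total y x with h | h
  · rw [max_eq_left h, div_self hx.ne', Real.log_one, max_eq_right]
    exact Real.log_nonpos (by positivity) ((div_le_one hx).2 h)
  · rw [max_eq_right h, max_eq_left (Real.log_nonneg ((one_le_div hx).2 h))]

end AuxLemmas

/-- if two Hermitian norms `H₀`, `H₁` are diagonalized by a common basis, then
for every `p ∈ [1,∞)` one has
`d_p(H₀,H₁)^p = d_p(H₀, H₀∨H₁)^p + d_p(H₁, H₀∨H₁)^p`. -/
theorem dp_pow_max_decomposition
    {V : Type*} [AddCommGroup V] [Module ℂ V] [FiniteDimensional ℂ V]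
    {n : ℕ} (hn : 1 ≤ n) (hdim : Module.finrank ℂ V = n)
    (e : Module.Basis (Fin n) ℂ V) (c₀ c₁ cmax : InnerProductSpace.Core ℂ V)
    (he₀ : OrthogonalFor c₀ (⇑e)) (he₁ : OrthogonalFor c₁ (⇑e))
    -- `cmax` is the Hermitian norm `H₀ ∨ H₁`
    (hemax : OrthogonalFor cmax (⇑e))
    (hmax : ∀ i : Fin n, hnorm cmax (e i) = max (hnorm c₀ (e i)) (hnorm c₁ (e i)))
    (p : ℝ) (hp : 1 ≤ p) :
    dp p (hnorm c₀) (hnorm c₁) ^ p =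
      dp p (hnorm c₀) (hnorm cmax) ^ p + dp p (hnorm c₁) (hnorm cmax) ^ p := by
  have hn0 : (0:ℝ) < n := by exact_mod_cast hn
  have hp0 : p ≠ 0 := by linarith
  have hne : ∀ i : Fin n, e i ≠ 0 := fun i => e.ne_zero i
  have hpos₀ : ∀ i, 0 < hnorm c₀ (e i) := fun i => hnorm_pos' c₀ (hne i)
  have hpos₁ : ∀ i, 0 < hnorm c₁ (e i) := fun i => hnorm_pos' c₁ (hne i)
  set a : Fin n → ℝ := fun i => Real.log (hnorm c₁ (e i) / hnorm c₀ (e i)) with ha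
  have hb : ∀ i : Fin n, Real.log (hnorm cmax (e i) / hnorm c₀ (e i)) = max (a i) 0 := by
    intro i
    rw [hmax i, log_max_div (hpos₀ i) (hpos₁ i)]
  have hc : ∀ i : Fin n, Real.log (hnorm cmax (e i) / hnorm c₁ (e i)) = max (-(a i)) 0 := by
    intro i
    rw [hmax i, max_comm, log_max_div (hpos₁ i) (hpos₀ i)]
    have h5 : Real.log (hnorm c₀ (e i) / hnorm c₁ (e i)) = -(a i) := by
      show _ = -(Real.log (hnorm c₁ (e i) / hnorm c₀ (e i)))
      rw [Real.log_div (hpos₀ i).ne' (hpos₁ i).ne', Real.log_div (hpos₁ i).ne' (hpos₀ i).ne']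
      ring
    rw [h5]
  have hdp : ∀ N₀ N₁ : V → ℝ, dp p N₀ N₁ ^ p =
      (∑ j ∈ Finset.Icc 1 n, |relSpec N₀ N₁ j| ^ p) / n := by
    intro N₀ N₁
    have hnonneg : (0:ℝ) ≤ (∑ j ∈ Finset.Icc 1 n, |relSpec N₀ N₁ j| ^ p) / n :=
      div_nonneg (Finset.sum_nonneg fun j _ => Real.rpow_nonneg (abs_nonneg _) p) hn0.le
    rw [dp, hdim, ← Real.rpow_mul hnonneg, one_div_mul_cancel hp0, Real.rpow_one]
  rw [hdp, hdp, hdp, ← add_div]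
  congr 1
  rw [sum_relSpec_diag hdim e c₀ c₁ he₀ he₁ (fun x => |x| ^ p),
    sum_relSpec_diag hdim e c₀ cmax he₀ hemax (fun x => |x| ^ p),
    sum_relSpec_diag hdim e c₁ cmax he₁ hemax (fun x => |x| ^ p),
    ← Finset.sum_add_distrib]
  refine Finset.sum_congr rfl fun i _ => ?_
  rw [hb i, hc i]
  exact abs_rpow_split hp (a i)


end
end

section
/- Let V be a finite-dimensional complex vector space, e₁,…,e_n a basis of V, and H₀, H₁, H₂ Hermitian norms on V such that e₁,…,e_n diagonalizes both H₀ and H₁ (it is orthogonal for both), and such that H₀ ≤ H₂ and H₁ ≤ H₂ pointwise. Then H₀ ∨ H₁ ≤ ρ_e(H₂) pointwise on V, where ρ_e(H₂) is the Gram–Schmidt projection of H₂ with respect to the basis e₁,…,e_n. -/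
open scoped BigOperators
open Filter Classical

noncomputable section

variable {V : Type*} [AddCommGroup V] [Module ℂ V]

/-- A filtration on a complex vector space `V`: a left-continuous, decreasing family of
subspaces which equals `⊤` for `t` small enough and `⊥` for `t` large enough. -/
structure IsFiltrationC (F : ℝ → Submodule ℂ V) : Prop where
  antitone : ∀ ⦃s t : ℝ⦄, s ≤ t → F t ≤ F s
  left_cont : ∀ t : ℝ, ∃ ε > 0, ∀ δ : ℝ, 0 < δ → δ < ε → F (t - δ) = F t
  eventually_top : ∃ t₀ : ℝ, ∀ t ≤ t₀, F t = ⊤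
  eventually_bot : ∃ t₁ : ℝ, ∀ t, t₁ ≤ t → F t = ⊥

/-- `ρ` is the Gram–Schmidt projection of the Hermitian norm `c` with respect to the
basis `e`. -/
def IsGramSchmidtProj {V : Type*} [AddCommGroup V] [Module ℂ V] {n : ℕ} (e : Fin n → V)
    (c ρ : InnerProductSpace.Core ℂ V) : Prop :=
  OrthogonalFor ρ e ∧
  ∀ i : Fin n, hnorm ρ (e i) =
    sInf {r : ℝ | ∃ a : Fin n → ℂ,
      r = hnorm c (e i + ∑ j ∈ Finset.univ.filter (fun j : Fin n => j < i), a j • e j)}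


namespace MaxGSAux

variable {V : Type*} [AddCommGroup V] [Module ℂ V]

lemma inner_zero_left (c : InnerProductSpace.Core ℂ V) (y : V) : c.inner 0 y = 0 := by
  have h := c.smul_left 0 y 0
  simpa using h

lemma inner_sum_left (c : InnerProductSpace.Core ℂ V) {ι : Type*} (s : Finset ι)
    (f : ι → V) (y : V) : c.inner (∑ i ∈ s, f i) y = ∑ i ∈ s, c.inner (f i) y := by
  classical
  induction s using Finset.induction_on with
  | empty => simpa using inner_zero_left c y
  | insert x s hx ih =>
    rw [Finset.sum_insert hx, Finset.sum_insert hx, c.add_left, ih]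

lemma inner_smul_right (c : InnerProductSpace.Core ℂ V) (x y : V) (r : ℂ) :
    c.inner x (r • y) = r * c.inner x y := by
  rw [← c.conj_inner_symm, c.smul_left, map_mul, c.conj_inner_symm]
  simp

lemma inner_sum_right (c : InnerProductSpace.Core ℂ V) {ι : Type*} (s : Finset ι)
    (f : ι → V) (x : V) : c.inner x (∑ i ∈ s, f i) = ∑ i ∈ s, c.inner x (f i) := by
  rw [← c.conj_inner_symm, inner_sum_left, map_sum]
  exact Finset.sum_congr rfl fun i _ => c.conj_inner_symm _ _

lemma expand (c : InnerProductSpace.Core ℂ V) {n : ℕ} {e : Fin n → V}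
    (he : OrthogonalFor c e) (b : Fin n → ℂ) :
    (c.inner (∑ i, b i • e i) (∑ i, b i • e i)).re
      = ∑ i, Complex.normSq (b i) * (c.inner (e i) (e i)).re := by
  rw [inner_sum_left]
  have hterm : ∀ i : Fin n, c.inner (b i • e i) (∑ j, b j • e j)
      = (Complex.normSq (b i) : ℂ) * c.inner (e i) (e i) := by
    intro i
    rw [c.smul_left, inner_sum_right]
    have : ∀ j : Fin n, c.inner (e i) (b j • e j)
        = if j = i then b i * c.inner (e i) (e i) else 0 := by
      intro j
      rw [inner_smul_right]
      by_cases h : j = i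
      · simp [h]
      · rw [he i j (fun h' => h h'.symm), mul_zero, if_neg h]
    rw [Finset.sum_congr rfl fun j _ => this j, Finset.sum_ite_eq' Finset.univ i]
    simp only [Finset.mem_univ, if_true]
    rw [← mul_assoc, ← Complex.normSq_eq_conj_mul_self]
  rw [Finset.sum_congr rfl fun i _ => hterm i, Complex.re_sum]
  exact Finset.sum_congr rfl fun i _ => Complex.re_ofReal_mul _ _

lemma hnorm_eq (c : InnerProductSpace.Core ℂ V) {n : ℕ} {e : Fin n → V}
    (he : OrthogonalFor c e) (b : Fin n → ℂ) :
    hnorm c (∑ i, b i • e i)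
      = Real.sqrt (∑ i, Complex.normSq (b i) * (c.inner (e i) (e i)).re) := by
  rw [hnorm, expand c he]

/-- key lower bound: if `e` is orthogonal for `c`, the norm of `e i` is at most the norm of
`e i + ∑_{j<i} a j • e j`. -/
lemma norm_le_perturb (c : InnerProductSpace.Core ℂ V) {n : ℕ} {e : Fin n → V}
    (he : OrthogonalFor c e) (i : Fin n) (a : Fin n → ℂ) :
    hnorm c (e i) ≤ hnorm c
      (e i + ∑ j ∈ Finset.univ.filter (fun j : Fin n => j < i), a j • e j) := by
  classical
  set b : Fin n → ℂ := fun j => if j = i then 1 else if j < i then a j else 0 with hb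
  have hv : e i + ∑ j ∈ Finset.univ.filter (fun j : Fin n => j < i), a j • e j
      = ∑ j, b j • e j := by
    rw [← Finset.add_sum_erase Finset.univ (fun j => b j • e j) (Finset.mem_univ i)]
    have hbi : b i • e i = e i := by simp [hb]
    rw [hbi]
    congr 1
    have hsub : (Finset.univ.filter (fun j : Fin n => j < i)) ⊆ Finset.univ.erase i := by
      intro j hj
      exact Finset.mem_erase.mpr ⟨ne_of_lt (Finset.mem_filter.mp hj).2, Finset.mem_univ j⟩
    calc ∑ j ∈ Finset.univ.filter (fun j : Fin n => j < i), a j • e j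
        = ∑ j ∈ Finset.univ.filter (fun j : Fin n => j < i), b j • e j := by
          refine Finset.sum_congr rfl fun j hj => ?_
          have hne : j ≠ i := ne_of_lt (Finset.mem_filter.mp hj).2
          simp [hb, hne, (Finset.mem_filter.mp hj).2]
      _ = ∑ j ∈ Finset.univ.erase i, b j • e j := by
          refine Finset.sum_subset hsub fun j hj hnj => ?_
          have hne : j ≠ i := (Finset.mem_erase.mp hj).1
          have hnlt : ¬ j < i := fun h => hnj (Finset.mem_filter.mpr ⟨Finset.mem_univ j, h⟩)
          simp [hb, hne, hnlt]
  rw [hv, hnorm_eq c he]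
  have h1 : (c.inner (e i) (e i)).re
      ≤ ∑ j, Complex.normSq (b j) * (c.inner (e j) (e j)).re := by
    have hle : Complex.normSq (b i) * (c.inner (e i) (e i)).re
        ≤ ∑ j, Complex.normSq (b j) * (c.inner (e j) (e j)).re := by
      refine Finset.single_le_sum (f := fun j => Complex.normSq (b j) * (c.inner (e j) (e j)).re) (fun j _ => ?_) (Finset.mem_univ i)
      exact mul_nonneg (Complex.normSq_nonneg _) (c.re_inner_nonneg _)
    have hbi : b i = 1 := by simp [hb]
    simpa [hbi] using hle
  exact Real.sqrt_le_sqrt h1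

lemma sq_le_of_hnorm_le (c d : InnerProductSpace.Core ℂ V) (x y : V)
    (h : hnorm c x ≤ hnorm d y) : (c.inner x x).re ≤ (d.inner y y).re := by
  have h1 : Real.sqrt ((c.inner x x).re) ≤ Real.sqrt ((d.inner y y).re) := h
  calc (c.inner x x).re = Real.sqrt ((c.inner x x).re) ^ 2 :=
        (Real.sq_sqrt (c.re_inner_nonneg _)).symm
    _ ≤ Real.sqrt ((d.inner y y).re) ^ 2 := by
        exact pow_le_pow_left₀ (Real.sqrt_nonneg _) h1 2
    _ = (d.inner y y).re := Real.sq_sqrt (d.re_inner_nonneg _)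

end MaxGSAux

/-- if `e₁,…,eₙ` diagonalizes both `H₀` and `H₁`, and `H₀ ≤ H₂`, `H₁ ≤ H₂`
pointwise, then `H₀ ∨ H₁ ≤ ρ_e(H₂)` pointwise. -/
theorem max_le_gramSchmidt
    {V : Type*} [AddCommGroup V] [Module ℂ V] [FiniteDimensional ℂ V]
    {n : ℕ} (e : Module.Basis (Fin n) ℂ V)
    (c₀ c₁ c₂ cmax ρc₂ : InnerProductSpace.Core ℂ V)
    (he₀ : OrthogonalFor c₀ (⇑e)) (he₁ : OrthogonalFor c₁ (⇑e))
    (h02 : ∀ v : V, hnorm c₀ v ≤ hnorm c₂ v) (h12 : ∀ v : V, hnorm c₁ v ≤ hnorm c₂ v)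
    -- `cmax` is the Hermitian norm `H₀ ∨ H₁`
    (hemax : OrthogonalFor cmax (⇑e))
    (hmax : ∀ i : Fin n, hnorm cmax (e i) = max (hnorm c₀ (e i)) (hnorm c₁ (e i)))
    -- `ρc₂` is the Gram–Schmidt projection of `H₂`
    (hρ : IsGramSchmidtProj (⇑e) c₂ ρc₂) :
    ∀ v : V, hnorm cmax v ≤ hnorm ρc₂ v := by
  classical
  intro v
  -- step 1: coordinatewise inequality
  have key : ∀ i : Fin n, hnorm cmax (e i) ≤ hnorm ρc₂ (e i) := by
    intro i
    rw [hmax i, hρ.2 i]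
    refine max_le ?_ ?_ <;>
    · refine le_csInf ⟨hnorm c₂ (e i + ∑ j ∈ Finset.univ.filter (fun j : Fin n => j < i),
        (0 : ℂ) • e j), 0, rfl⟩ ?_
      rintro r ⟨a, rfl⟩
      first
      | exact le_trans (MaxGSAux.norm_le_perturb c₀ he₀ i a) (h02 _)
      | exact le_trans (MaxGSAux.norm_le_perturb c₁ he₁ i a) (h12 _)
  have key2 : ∀ i : Fin n, (cmax.inner (e i) (e i)).re ≤ (ρc₂.inner (e i) (e i)).re :=
    fun i => MaxGSAux.sq_le_of_hnorm_le cmax ρc₂ (e i) (e i) (key i)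
  -- step 2: expand v in the basis
  have hv : v = ∑ i, e.repr v i • e i := (e.sum_repr v).symm
  rw [hv, MaxGSAux.hnorm_eq cmax hemax, MaxGSAux.hnorm_eq ρc₂ hρ.1]
  refine Real.sqrt_le_sqrt (Finset.sum_le_sum fun i _ => ?_)
  exact mul_le_mul_of_nonneg_left (key2 i) (Complex.normSq_nonneg _)


end
end

section
/- Let V be a finite-dimensional complex vector space, 𝓕 a filtration on V, N an arbitrary norm on V, and H a Hermitian norm on V. Let N_t^𝓕 (t ≥ 0) be the ray of norms emanating from N associated with 𝓕 via the envelope formula, and H_t^𝓕 the geodesic ray of Hermitian norms emanating from H associated with 𝓕 via an adapted orthonormal basis. Then for every t ∈ [0,∞): d_∞(N_t^𝓕, H_t^𝓕) ≤ d_∞(N, H) + log dim V. -/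
open scoped BigOperators
open Filter Classical

noncomputable section

variable {V : Type*} [AddCommGroup V] [Module ℂ V]

/-- The ray of norms emanating from a norm `N` associated with a filtration `F` via the
envelope formula. -/
def envRay {V : Type*} [AddCommGroup V] [Module ℂ V]
    (F : ℝ → Submodule ℂ V) (N : V → ℝ) (t : ℝ) : V → ℝ :=
  fun f => sInf {r : ℝ | ∃ (m : ℕ) (g : Fin m → V), f = ∑ i, g i ∧
    r = ∑ i, N (g i) * filtChi F (g i) ^ t}

/-! ### Auxiliary lemmas -/

section Aux

open Module

lemma aux_hnorm_eq (c : InnerProductSpace.Core ℂ V) :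
    ∀ x : V, hnorm c x = @norm V (c.toNormedAddCommGroup).toNorm x := fun _ => rfl

lemma aux_hnorm_isNorm (c : InnerProductSpace.Core ℂ V) : IsComplexNorm (hnorm c) := by
  letI : NormedAddCommGroup V := c.toNormedAddCommGroup
  letI : InnerProductSpace ℂ V := InnerProductSpace.ofCore c.toCore
  refine ⟨fun x => ?_, fun a x => ?_, fun x y => ?_⟩
  · exact norm_eq_zero (E := V) (a := x)
  · exact norm_smul a x
  · exact norm_add_le x y

lemma aux_hnorm_sum_sq (c : InnerProductSpace.Core ℂ V) {m : ℕ} (u : Fin m → V)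
    (hu : OrthonormalFor c u) (a : Fin m → ℂ) :
    hnorm c (∑ i, a i • u i) ^ 2 = ∑ i, ‖a i‖ ^ 2 := by
  letI : NormedAddCommGroup V := c.toNormedAddCommGroup
  letI : InnerProductSpace ℂ V := InnerProductSpace.ofCore c.toCore
  have hu' : Orthonormal ℂ u := by
    rw [orthonormal_iff_ite]
    intro i j
    convert hu i j using 2
  have h := hu'.inner_sum a a Finset.univ
  have h2 : hnorm c (∑ i, a i • u i) ^ 2 = (inner ℂ (∑ i, a i • u i) (∑ i, a i • u i) : ℂ).re := by
    rw [aux_hnorm_eq, norm_sq_eq_re_inner (𝕜 := ℂ), RCLike.re_to_complex]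
  rw [h2, h, Complex.re_sum]
  refine Finset.sum_congr rfl fun i _ => ?_
  rw [← Complex.normSq_eq_norm_sq, Complex.normSq_apply, Complex.mul_re]
  simp

section Filt

variable {F : ℝ → Submodule ℂ V}

lemma aux_filtWeight_mem (hF : IsFiltrationC F) {s : V} (hs : s ≠ 0) :
    s ∈ F (filtWeight F s) := by
  obtain ⟨t₀, h₀⟩ := hF.eventually_top
  obtain ⟨t₁, h₁⟩ := hF.eventually_bot
  have hne : {l : ℝ | s ∈ F l}.Nonempty := ⟨t₀, by simp [h₀ t₀ le_rfl]⟩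
  have hbdd : BddAbove {l : ℝ | s ∈ F l} := by
    refine ⟨t₁, fun l hl => ?_⟩
    by_contra h
    push_neg at h
    simp only [Set.mem_setOf_eq] at hl
    rw [h₁ l h.le] at hl
    exact hs (Submodule.mem_bot ℂ |>.mp hl)
  obtain ⟨ε, hε, hεc⟩ := hF.left_cont (filtWeight F s)
  obtain ⟨x, hx, hx2⟩ := exists_lt_of_lt_csSup hne
    (show filtWeight F s - ε / 2 < filtWeight F s by linarith)
  have h3 : s ∈ F (filtWeight F s - ε / 2) := hF.antitone (by linarith) hx
  rwa [hεc (ε / 2) (by linarith) (by linarith)] at h3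

lemma aux_le_filtWeight_iff (hF : IsFiltrationC F) {s : V} (hs : s ≠ 0) {l : ℝ} :
    s ∈ F l ↔ l ≤ filtWeight F s := by
  obtain ⟨t₁, h₁⟩ := hF.eventually_bot
  constructor
  · intro h
    refine le_csSup ⟨t₁, fun x hx => ?_⟩ h
    by_contra hc
    push_neg at hc
    simp only [Set.mem_setOf_eq] at hx
    rw [h₁ x hc.le] at hx
    exact hs (Submodule.mem_bot ℂ |>.mp hx)
  · intro h
    exact hF.antitone h (aux_filtWeight_mem hF hs)

lemma aux_filtWeight_le (hF : IsFiltrationC F) {t₁ : ℝ} (h₁ : ∀ t, t₁ ≤ t → F t = ⊥)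
    {s : V} (hs : s ≠ 0) : filtWeight F s ≤ t₁ := by
  by_contra hc
  push_neg at hc
  have := aux_filtWeight_mem hF hs
  rw [h₁ _ hc.le] at this
  exact hs (Submodule.mem_bot ℂ |>.mp this)

variable [FiniteDimensional ℂ V]

lemma aux_jumpNum_mem (hF : IsFiltrationC F) {j : ℕ} (hj : 1 ≤ j) (hjn : j ≤ finrank ℂ V) :
    j ≤ finrank ℂ (F (jumpNum F j)) := by
  obtain ⟨t₀, h₀⟩ := hF.eventually_top
  obtain ⟨t₁, h₁⟩ := hF.eventually_bot
  have hne : {t : ℝ | j ≤ finrank ℂ (F t)}.Nonempty := by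
    refine ⟨t₀, ?_⟩
    simp only [Set.mem_setOf_eq]
    rw [h₀ t₀ le_rfl, finrank_top]
    exact hjn
  have hbdd : BddAbove {t : ℝ | j ≤ finrank ℂ (F t)} := by
    refine ⟨t₁, fun l hl => ?_⟩
    by_contra h
    push_neg at h
    simp only [Set.mem_setOf_eq] at hl
    rw [h₁ l h.le] at hl
    simp only [finrank_bot] at hl
    omega
  obtain ⟨ε, hε, hεc⟩ := hF.left_cont (jumpNum F j)
  obtain ⟨x, hx, hx2⟩ := exists_lt_of_lt_csSup hne
    (show jumpNum F j - ε / 2 < jumpNum F j by linarith)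
  have h3 : j ≤ finrank ℂ (F (jumpNum F j - ε / 2)) :=
    le_trans hx (Submodule.finrank_mono (hF.antitone (by linarith)))
  rwa [hεc (ε / 2) (by linarith) (by linarith)] at h3

lemma aux_le_jumpNum_iff (hF : IsFiltrationC F) {j : ℕ} (hj : 1 ≤ j) (hjn : j ≤ finrank ℂ V)
    {l : ℝ} : l ≤ jumpNum F j ↔ j ≤ finrank ℂ (F l) := by
  obtain ⟨t₁, h₁⟩ := hF.eventually_bot
  constructor
  · intro h
    exact le_trans (aux_jumpNum_mem hF hj hjn) (Submodule.finrank_mono (hF.antitone h))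
  · intro h
    refine le_csSup ⟨t₁, fun x hx => ?_⟩ h
    by_contra hc
    push_neg at hc
    simp only [Set.mem_setOf_eq] at hx
    rw [h₁ x hc.le] at hx
    simp only [finrank_bot] at hx
    omega

lemma aux_card_lt {n m : ℕ} (hm : m ≤ n) :
    Fintype.card {i : Fin n // i.1 < m} = m := by
  have e : {i : Fin n // i.1 < m} ≃ Fin m :=
    { toFun := fun i => ⟨i.1.1, i.2⟩
      invFun := fun k => ⟨⟨k.1, lt_of_lt_of_le k.2 hm⟩, k.2⟩
      left_inv := fun i => by ext; rfl
      right_inv := fun k => by ext; rfl }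
  rw [Fintype.card_congr e, Fintype.card_fin]

lemma aux_F_eq_span (hF : IsFiltrationC F) {n : ℕ} (b : Basis (Fin n) ℂ V)
    (hb : ∀ i : Fin n, b i ∈ F (jumpNum F (i.1 + 1))) (l : ℝ) :
    F l = Submodule.span ℂ (b '' {i : Fin n | i.1 < finrank ℂ (F l)}) := by
  have hnV : finrank ℂ V = n := by rw [finrank_eq_card_basis b, Fintype.card_fin]
  set m := finrank ℂ (F l) with hm
  have hmn : m ≤ n := hnV ▸ Submodule.finrank_le (F l)
  have hsub : Submodule.span ℂ (b '' {i : Fin n | i.1 < m}) ≤ F l := by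
    rw [Submodule.span_le]
    rintro x ⟨i, hi, rfl⟩
    have hij : i.1 + 1 ≤ finrank ℂ (F l) := hi
    have hlj : l ≤ jumpNum F (i.1 + 1) :=
      (aux_le_jumpNum_iff hF (Nat.succ_le_succ (Nat.zero_le _))
        (by omega) (l := l)).mpr hij
    exact hF.antitone hlj (hb i)
  have hli : LinearIndependent ℂ (fun i : {i : Fin n // i.1 < m} => b i.1) :=
    b.linearIndependent.comp _ Subtype.val_injective
  have himg : Set.range (fun i : {i : Fin n // i.1 < m} => b i.1)
      = b '' {i : Fin n | i.1 < m} := (Set.image_eq_range _ _).symm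
  have hfr : finrank ℂ (Submodule.span ℂ (b '' {i : Fin n | i.1 < m})) = m := by
    rw [← himg, finrank_span_eq_card hli, aux_card_lt hmn]
  exact (Submodule.eq_of_le_of_finrank_le hsub (le_of_eq hfr.symm)).symm

lemma aux_repr_eq_zero (hF : IsFiltrationC F) {n : ℕ} (b : Basis (Fin n) ℂ V)
    (hb : ∀ i : Fin n, b i ∈ F (jumpNum F (i.1 + 1))) {l : ℝ} {v : V}
    (hv : v ∈ F l) {i : Fin n} (hi : jumpNum F (i.1 + 1) < l) :
    b.repr v i = 0 := by
  have hnV : finrank ℂ V = n := by rw [finrank_eq_card_basis b, Fintype.card_fin]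
  rw [aux_F_eq_span hF b hb l, Basis.mem_span_image] at hv
  by_contra h
  have hmem : i ∈ (b.repr v).support := Finsupp.mem_support_iff.mpr h
  have : i ∈ {i : Fin n | i.1 < finrank ℂ (F l)} := hv hmem
  have hij : i.1 + 1 ≤ finrank ℂ (F l) := this
  have : l ≤ jumpNum F (i.1 + 1) :=
    (aux_le_jumpNum_iff hF (Nat.succ_le_succ (Nat.zero_le _)) (by omega)).mpr hij
  linarith

end Filt

section NormFacts

variable {N : V → ℝ}

lemma aux_norm_nonneg (hN : IsComplexNorm N) (x : V) : 0 ≤ N x := by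
  have h0 : N 0 = 0 := (hN.eq_zero_iff 0).mpr rfl
  have hneg : N (-x) = N x := by simpa using hN.smul (-1) x
  have h2 := hN.add_le x (-x)
  rw [add_neg_cancel, h0, hneg] at h2
  linarith

lemma aux_norm_sum_le (hN : IsComplexNorm N) {ι : Type*} (s : Finset ι) (g : ι → V) :
    N (∑ i ∈ s, g i) ≤ ∑ i ∈ s, N (g i) := by
  classical
  induction s using Finset.cons_induction with
  | empty => simp [(hN.eq_zero_iff 0).mpr rfl]
  | cons a s ha ih =>
    rw [Finset.sum_cons, Finset.sum_cons]
    exact le_trans (hN.add_le _ _) (by linarith)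

lemma aux_chi_nonneg (F : ℝ → Submodule ℂ V) (s : V) : 0 ≤ filtChi F s := by
  rw [filtChi]
  split
  · exact le_rfl
  · exact (Real.exp_pos _).le

lemma aux_chi_rpow {F : ℝ → Submodule ℂ V} {s : V} (hs : s ≠ 0) (t : ℝ) :
    filtChi F s ^ t = Real.exp (-filtWeight F s * t) := by
  rw [filtChi, if_neg hs, Real.rpow_def_of_pos (Real.exp_pos _), Real.log_exp]

lemma aux_env_le {F : ℝ → Submodule ℂ V} (hN : IsComplexNorm N) (t : ℝ)
    (f : V) {m : ℕ} (g : Fin m → V) (hfg : f = ∑ i, g i) :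
    envRay F N t f ≤ ∑ i, N (g i) * filtChi F (g i) ^ t := by
  apply csInf_le
  · refine ⟨0, fun r hr => ?_⟩
    obtain ⟨m', g', _, rfl⟩ := hr
    exact Finset.sum_nonneg fun i _ => mul_nonneg (aux_norm_nonneg hN _)
      (Real.rpow_nonneg (aux_chi_nonneg F _) t)
  · exact ⟨m, g, hfg, rfl⟩

lemma aux_env_ge {F : ℝ → Submodule ℂ V} (hF : IsFiltrationC F) (hN : IsComplexNorm N)
    {t : ℝ} (ht : 0 ≤ t) :
    ∃ K : ℝ, 0 < K ∧ ∀ f : V, K * N f ≤ envRay F N t f := by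
  obtain ⟨t₁, h₁⟩ := hF.eventually_bot
  refine ⟨Real.exp (-(max t₁ 0) * t), Real.exp_pos _, fun f => ?_⟩
  refine le_csInf ?_ ?_
  · exact ⟨N f * filtChi F f ^ t, 1, fun _ => f, by simp, by simp⟩
  rintro r ⟨m, g, rfl, rfl⟩
  have key : ∀ i : Fin m, Real.exp (-(max t₁ 0) * t) * N (g i)
      ≤ N (g i) * filtChi F (g i) ^ t := by
    intro i
    by_cases h : g i = 0
    · rw [h, (hN.eq_zero_iff 0).mpr rfl]
      simp
    · rw [aux_chi_rpow h, mul_comm (N (g i))]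
      refine mul_le_mul_of_nonneg_right (Real.exp_le_exp.mpr ?_) (aux_norm_nonneg hN _)
      have hw : filtWeight F (g i) ≤ max t₁ 0 :=
        le_trans (aux_filtWeight_le hF h₁ h) (le_max_left _ _)
      nlinarith
  calc Real.exp (-(max t₁ 0) * t) * N (∑ i, g i)
      ≤ Real.exp (-(max t₁ 0) * t) * ∑ i, N (g i) :=
        mul_le_mul_of_nonneg_left (aux_norm_sum_le hN _ _) (Real.exp_pos _).le
    _ = ∑ i, Real.exp (-(max t₁ 0) * t) * N (g i) := Finset.mul_sum _ _ _
    _ ≤ ∑ i, N (g i) * filtChi F (g i) ^ t := Finset.sum_le_sum fun i _ => key i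

lemma aux_env_pos {F : ℝ → Submodule ℂ V} (hF : IsFiltrationC F) (hN : IsComplexNorm N)
    {t : ℝ} (ht : 0 ≤ t) {f : V} (hf : f ≠ 0) : 0 < envRay F N t f := by
  obtain ⟨K, hK, hKf⟩ := aux_env_ge hF hN ht
  have hNf : 0 < N f :=
    lt_of_le_of_ne (aux_norm_nonneg hN f) (fun h => hf ((hN.eq_zero_iff f).mp h.symm))
  exact lt_of_lt_of_le (mul_pos hK hNf) (hKf f)

lemma aux_coord_bound [FiniteDimensional ℂ V] {n : ℕ} (b : Basis (Fin n) ℂ V)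
    (hN : IsComplexNorm N) :
    ∃ C : ℝ, 0 ≤ C ∧ ∀ v : V, (∑ i, ‖b.repr v i‖) ≤ C * N v := by
  letI : NormedAddCommGroup V := AddGroupNorm.toNormedAddCommGroup
    { toFun := N
      map_zero' := (hN.eq_zero_iff 0).mpr rfl
      add_le' := hN.add_le
      neg' := fun x => by simpa using hN.smul (-1) x
      eq_zero_of_map_eq_zero' := fun x hx => (hN.eq_zero_iff x).mp hx }
  letI : NormedSpace ℂ V :=
    { norm_smul_le := fun a x => le_of_eq (hN.smul a x) }
  let f : Fin n → V →L[ℂ] ℂ := fun i => LinearMap.toContinuousLinearMap (b.coord i)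
  refine ⟨∑ i, ‖f i‖, Finset.sum_nonneg fun i _ => norm_nonneg _, fun v => ?_⟩
  have h1 : ∀ i, ‖b.repr v i‖ = ‖f i v‖ := fun i => rfl
  calc ∑ i, ‖b.repr v i‖ = ∑ i, ‖f i v‖ := by simp only [h1]
    _ ≤ ∑ i, ‖f i‖ * ‖v‖ := Finset.sum_le_sum fun i _ => (f i).le_opNorm v
    _ = (∑ i, ‖f i‖) * N v := by rw [← Finset.sum_mul]; rfl

end NormFacts

section Spec

variable [FiniteDimensional ℂ V] (N₀ N₁ : V → ℝ)

lemma aux_relSpec_bounds {n : ℕ} (b : Basis (Fin n) ℂ V) {α β : ℝ}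
    (h : ∀ v : V, v ≠ 0 → α ≤ Real.log (N₁ v / N₀ v) ∧ Real.log (N₁ v / N₀ v) ≤ β)
    {j : ℕ} (hj1 : 1 ≤ j) (hjn : j ≤ n) :
    α ≤ relSpec N₀ N₁ j ∧ relSpec N₀ N₁ j ≤ β := by
  have hαβ : α ≤ β := by
    have hb0 : b ⟨0, by omega⟩ ≠ 0 := b.ne_zero ⟨0, by omega⟩
    have := h _ hb0
    exact le_trans this.1 this.2
  have hWb : ∀ W : Submodule ℂ V, finrank ℂ W = j →
      α ≤ sInf {x : ℝ | ∃ w ∈ W, w ≠ 0 ∧ x = Real.log (N₁ w / N₀ w)} ∧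
      sInf {x : ℝ | ∃ w ∈ W, w ≠ 0 ∧ x = Real.log (N₁ w / N₀ w)} ≤ β := by
    intro W hW
    have hWne : W ≠ ⊥ := by
      intro hbot
      rw [hbot, finrank_bot] at hW
      omega
    obtain ⟨w, hwW, hw0⟩ := Submodule.exists_mem_ne_zero_of_ne_bot hWne
    have hne : {x : ℝ | ∃ w ∈ W, w ≠ 0 ∧ x = Real.log (N₁ w / N₀ w)}.Nonempty :=
      ⟨_, w, hwW, hw0, rfl⟩
    have hbdd : ∀ x ∈ {x : ℝ | ∃ w ∈ W, w ≠ 0 ∧ x = Real.log (N₁ w / N₀ w)},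
        α ≤ x ∧ x ≤ β := by
      rintro x ⟨w', _, hw', rfl⟩
      exact h w' hw'
    constructor
    · exact le_csInf hne fun x hx => (hbdd x hx).1
    · exact csInf_le_of_le ⟨α, fun x hx => (hbdd x hx).1⟩ ⟨w, hwW, hw0, rfl⟩
        (h w hw0).2
  have hTne : ∃ r, ∃ W : Submodule ℂ V, finrank ℂ W = j ∧
      r = sInf {x : ℝ | ∃ w ∈ W, w ≠ 0 ∧ x = Real.log (N₁ w / N₀ w)} := by
    refine ⟨_, Submodule.span ℂ (Set.range fun k : Fin j => b (Fin.castLE hjn k)), ?_, rfl⟩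
    have hli : LinearIndependent ℂ (fun k : Fin j => b (Fin.castLE hjn k)) :=
      b.linearIndependent.comp _ (Fin.castLE_injective hjn)
    rw [finrank_span_eq_card hli, Fintype.card_fin]
  rw [relSpec]
  constructor
  · obtain ⟨r, W, hW, hr⟩ := hTne
    refine le_csSup_of_le ⟨β, ?_⟩ ⟨W, hW, hr⟩ (hr ▸ (hWb W hW).1)
    rintro x ⟨W', hW', rfl⟩
    exact (hWb W' hW').2
  · refine csSup_le ?_ ?_
    · obtain ⟨r, W, hW, hr⟩ := hTne
      exact ⟨r, W, hW, hr⟩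
    · rintro x ⟨W', hW', rfl⟩
      exact (hWb W' hW').2

lemma aux_dInf_nonneg : 0 ≤ dInf N₀ N₁ := by
  apply Real.sSup_nonneg
  rintro r ⟨j, hj, rfl⟩
  exact abs_nonneg _

lemma aux_dInf_set_eq : {r : ℝ | ∃ j ∈ Finset.Icc 1 (finrank ℂ V), r = |relSpec N₀ N₁ j|}
    = (fun j => |relSpec N₀ N₁ j|) '' ↑(Finset.Icc 1 (finrank ℂ V)) := by
  ext r
  simp only [Set.mem_setOf_eq, Set.mem_image, Finset.mem_coe]
  constructor
  · rintro ⟨j, hj, rfl⟩; exact ⟨j, hj, rfl⟩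
  · rintro ⟨j, hj, rfl⟩; exact ⟨j, hj, rfl⟩

lemma aux_abs_relSpec_le_dInf {j : ℕ} (hj : j ∈ Finset.Icc 1 (finrank ℂ V)) :
    |relSpec N₀ N₁ j| ≤ dInf N₀ N₁ := by
  have hfin : {r : ℝ | ∃ j ∈ Finset.Icc 1 (finrank ℂ V), r = |relSpec N₀ N₁ j|}.Finite := by
    rw [aux_dInf_set_eq]
    exact (Finset.Icc 1 (finrank ℂ V)).finite_toSet.image _
  exact le_csSup hfin.bddAbove ⟨j, hj, rfl⟩

lemma aux_dInf_le {B : ℝ} (hB : 0 ≤ B)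
    (h : ∀ j ∈ Finset.Icc 1 (finrank ℂ V), |relSpec N₀ N₁ j| ≤ B) : dInf N₀ N₁ ≤ B := by
  apply Real.sSup_le _ hB
  rintro r ⟨j, hj, rfl⟩
  exact h j hj

lemma aux_log_le_relSpec_one {α β : ℝ}
    (hlb : ∀ v : V, v ≠ 0 → α ≤ Real.log (N₁ v / N₀ v))
    (hub : ∀ v : V, v ≠ 0 → Real.log (N₁ v / N₀ v) ≤ β)
    (hN₀s : ∀ (a : ℂ) (x : V), N₀ (a • x) = ‖a‖ * N₀ x)
    (hN₁s : ∀ (a : ℂ) (x : V), N₁ (a • x) = ‖a‖ * N₁ x)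
    {v : V} (hv : v ≠ 0) :
    Real.log (N₁ v / N₀ v) ≤ relSpec N₀ N₁ 1 := by
  have hsetv : {x : ℝ | ∃ w ∈ Submodule.span ℂ {v}, w ≠ 0 ∧ x = Real.log (N₁ w / N₀ w)}
      = {Real.log (N₁ v / N₀ v)} := by
    ext x
    simp only [Set.mem_setOf_eq, Set.mem_singleton_iff]
    constructor
    · rintro ⟨w, hwspan, hw0, rfl⟩
      obtain ⟨a, rfl⟩ := Submodule.mem_span_singleton.mp hwspan
      have ha : ‖a‖ ≠ 0 := by
        simp only [ne_eq, norm_eq_zero]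
        intro h
        exact hw0 (by simp [h])
      rw [hN₀s, hN₁s, mul_div_mul_left _ _ ha]
    · rintro rfl
      exact ⟨v, Submodule.mem_span_singleton_self v, hv, rfl⟩
  have hmem1 : Real.log (N₁ v / N₀ v) ∈ {r : ℝ | ∃ W : Submodule ℂ V, finrank ℂ W = 1 ∧
      r = sInf {x : ℝ | ∃ w ∈ W, w ≠ 0 ∧ x = Real.log (N₁ w / N₀ w)}} := by
    refine ⟨Submodule.span ℂ {v}, finrank_span_singleton hv, ?_⟩
    rw [hsetv, csInf_singleton]
  have hbdd : BddAbove {r : ℝ | ∃ W : Submodule ℂ V, finrank ℂ W = 1 ∧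
      r = sInf {x : ℝ | ∃ w ∈ W, w ≠ 0 ∧ x = Real.log (N₁ w / N₀ w)}} := by
    refine ⟨β, ?_⟩
    rintro r ⟨W, hW, rfl⟩
    have hWne : W ≠ ⊥ := by
      intro hbot
      rw [hbot, finrank_bot] at hW
      omega
    obtain ⟨w, hwW, hw0⟩ := Submodule.exists_mem_ne_zero_of_ne_bot hWne
    refine csInf_le_of_le ⟨α, ?_⟩ ⟨w, hwW, hw0, rfl⟩ (hub w hw0)
    rintro x ⟨w', _, hw', rfl⟩
    exact hlb w' hw'
  exact le_csSup hbdd hmem1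

lemma aux_relSpec_top_le {α : ℝ}
    (hlb : ∀ v : V, v ≠ 0 → α ≤ Real.log (N₁ v / N₀ v))
    {v : V} (hv : v ≠ 0) :
    relSpec N₀ N₁ (finrank ℂ V) ≤ Real.log (N₁ v / N₀ v) := by
  have hTset : {r : ℝ | ∃ W : Submodule ℂ V, finrank ℂ W = finrank ℂ V ∧
      r = sInf {x : ℝ | ∃ w ∈ W, w ≠ 0 ∧ x = Real.log (N₁ w / N₀ w)}}
      = {sInf {x : ℝ | ∃ w ∈ (⊤ : Submodule ℂ V), w ≠ 0 ∧ x = Real.log (N₁ w / N₀ w)}} := by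
    ext r
    simp only [Set.mem_setOf_eq, Set.mem_singleton_iff]
    constructor
    · rintro ⟨W, hW, rfl⟩
      rw [Submodule.eq_top_of_finrank_eq hW]
    · rintro rfl
      exact ⟨⊤, finrank_top ℂ V, rfl⟩
  rw [relSpec, hTset, csSup_singleton]
  refine csInf_le ⟨α, ?_⟩ ⟨v, Submodule.mem_top, hv, rfl⟩
  rintro x ⟨w', _, hw', rfl⟩
  exact hlb w' hw'

end Spec

end Aux

/-- for every `t ≥ 0`,
`d_∞(N_t^𝓕, H_t^𝓕) ≤ d_∞(N, H) + log (dim V)`. -/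
theorem envRay_geodesicRay_dInf_le
    {V : Type*} [AddCommGroup V] [Module ℂ V] [FiniteDimensional ℂ V]
    {n : ℕ} (F : ℝ → Submodule ℂ V) (hF : IsFiltrationC F)
    (N : V → ℝ) (hN : IsComplexNorm N)
    (b : Module.Basis (Fin n) ℂ V) (c : ℝ → InnerProductSpace.Core ℂ V)
    (hray : IsGeodesicRayFor F (⇑b) c) :
    ∀ t : ℝ, 0 ≤ t →
      dInf (envRay F N t) (hnorm (c t)) ≤
        dInf N (hnorm (c 0)) + Real.log (Module.finrank ℂ V) := by
  intro t ht
  classical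
  have hnV : Module.finrank ℂ V = n := by
    rw [Module.finrank_eq_card_basis b, Fintype.card_fin]
  obtain ⟨hON, hmem, hrt⟩ := hray
  rcases Nat.eq_zero_or_pos n with hn0 | hn
  · subst hn0
    have hIcc : Finset.Icc 1 (Module.finrank ℂ V) = ∅ := by
      rw [hnV]
      exact Finset.Icc_eq_empty (by omega)
    have hd : ∀ A B : V → ℝ, dInf A B = 0 := by
      intro A B
      rw [dInf]
      have he : {r : ℝ | ∃ j ∈ Finset.Icc 1 (Module.finrank ℂ V), r = |relSpec A B j|} = ∅ := by
        rw [hIcc]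
        ext r
        simp
      rw [he, Real.sSup_empty]
    rw [hd, hd, hnV]
    simp
  -- main case : 1 ≤ n
  have hH0 : IsComplexNorm (hnorm (c 0)) := aux_hnorm_isNorm _
  have hHt : IsComplexNorm (hnorm (c t)) := aux_hnorm_isNorm _
  have hNpos : ∀ v : V, v ≠ 0 → 0 < N v := fun v hv =>
    lt_of_le_of_ne (aux_norm_nonneg hN v) (fun h => hv ((hN.eq_zero_iff v).mp h.symm))
  have hH0pos : ∀ v : V, v ≠ 0 → 0 < hnorm (c 0) v := fun v hv =>
    lt_of_le_of_ne (aux_norm_nonneg hH0 v) (fun h => hv ((hH0.eq_zero_iff v).mp h.symm))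
  have hHtpos : ∀ v : V, v ≠ 0 → 0 < hnorm (c t) v := fun v hv =>
    lt_of_le_of_ne (aux_norm_nonneg hHt v) (fun h => hv ((hHt.eq_zero_iff v).mp h.symm))
  have hNtpos : ∀ v : V, v ≠ 0 → 0 < envRay F N t v := fun v hv => aux_env_pos hF hN ht hv
  -- squared-norm formulas
  have hH0sq : ∀ v : V, hnorm (c 0) v ^ 2 = ∑ i, ‖b.repr v i‖ ^ 2 := by
    intro v
    have h := aux_hnorm_sum_sq (c 0) (⇑b) hON (fun i => b.repr v i)
    rwa [b.sum_repr v] at h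
  have hu : OrthonormalFor (c t)
      (fun i : Fin n => ((Real.exp (t * jumpNum F (i.1 + 1)) : ℝ) : ℂ) • b i) := by
    intro i j
    convert hrt t ht i j using 2 <;> exact Complex.coe_smul _ _
  have hHtsq : ∀ v : V, hnorm (c t) v ^ 2
      = ∑ i, (‖b.repr v i‖ * Real.exp (-(t * jumpNum F (i.1 + 1)))) ^ 2 := by
    intro v
    have h := aux_hnorm_sum_sq (c t) _ hu
      (fun i => b.repr v i * ((Real.exp (-(t * jumpNum F (i.1 + 1))) : ℝ) : ℂ))
    have hdecomp : (∑ i, (b.repr v i * ((Real.exp (-(t * jumpNum F (i.1 + 1))) : ℝ) : ℂ)) •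
        (((Real.exp (t * jumpNum F (i.1 + 1)) : ℝ) : ℂ) • b i)) = v := by
      conv_rhs => rw [← b.sum_repr v]
      refine Finset.sum_congr rfl fun i _ => ?_
      rw [smul_smul, mul_assoc, ← Complex.ofReal_mul, ← Real.exp_add]
      simp
    rw [hdecomp] at h
    rw [h]
    refine Finset.sum_congr rfl fun i _ => ?_
    rw [norm_mul, Complex.norm_real, Real.norm_eq_abs, abs_of_nonneg (Real.exp_pos _).le]
  -- elementary comparisons between N and H₀
  obtain ⟨C₁, hC₁0, hC₁⟩ := aux_coord_bound b hN
  have habs_le_H0 : ∀ (v : V) (i : Fin n), ‖b.repr v i‖ ≤ hnorm (c 0) v := by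
    intro v i
    have h1 : ‖b.repr v i‖ ^ 2 ≤ hnorm (c 0) v ^ 2 := by
      rw [hH0sq]
      exact Finset.single_le_sum (f := fun i => ‖b.repr v i‖ ^ 2)
        (fun i _ => sq_nonneg _) (Finset.mem_univ i)
    have h2 := Real.sqrt_le_sqrt h1
    rwa [Real.sqrt_sq (norm_nonneg _), Real.sqrt_sq (aux_norm_nonneg hH0 v)] at h2
  have hH0_le_sum : ∀ v : V, hnorm (c 0) v ≤ ∑ i, ‖b.repr v i‖ := by
    intro v
    have h1 : hnorm (c 0) v ^ 2 ≤ (∑ i, ‖b.repr v i‖) ^ 2 := by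
      rw [hH0sq]
      exact Finset.sum_sq_le_sq_sum_of_nonneg fun i _ => norm_nonneg _
    have h2 := Real.sqrt_le_sqrt h1
    rwa [Real.sqrt_sq (aux_norm_nonneg hH0 v), Real.sqrt_sq
      (Finset.sum_nonneg fun i _ => norm_nonneg _)] at h2
  have hH0_le : ∀ v : V, hnorm (c 0) v ≤ C₁ * N v :=
    fun v => le_trans (hH0_le_sum v) (hC₁ v)
  have hb0 : ∀ i : Fin n, b i ≠ 0 := fun i => b.ne_zero i
  have hC₂pos : 0 < ∑ i, N (b i) := by
    have h0 : (0 : ℝ) < N (b ⟨0, hn⟩) := hNpos _ (hb0 _)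
    exact Finset.sum_pos' (fun i _ => aux_norm_nonneg hN _) ⟨⟨0, hn⟩, Finset.mem_univ _, h0⟩
  have hN_le : ∀ v : V, N v ≤ (∑ i, N (b i)) * hnorm (c 0) v := by
    intro v
    calc N v = N (∑ i, b.repr v i • b i) := by rw [b.sum_repr]
      _ ≤ ∑ i, N (b.repr v i • b i) := aux_norm_sum_le hN _ _
      _ = ∑ i, ‖b.repr v i‖ * N (b i) :=
          Finset.sum_congr rfl fun i _ => hN.smul _ _
      _ ≤ ∑ i, hnorm (c 0) v * N (b i) := Finset.sum_le_sum fun i _ =>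
          mul_le_mul_of_nonneg_right (habs_le_H0 v i) (aux_norm_nonneg hN _)
      _ = (∑ i, N (b i)) * hnorm (c 0) v := by
          rw [← Finset.mul_sum, mul_comm]
  have hC₁pos : 0 < C₁ := by
    have h1 := hH0_le (b ⟨0, hn⟩)
    have h2 := hH0pos _ (hb0 ⟨0, hn⟩)
    have h3 := hNpos _ (hb0 ⟨0, hn⟩)
    nlinarith
  -- pointwise log bounds between N and H₀
  have hlb0 : ∀ v : V, v ≠ 0 →
      -Real.log (∑ i, N (b i)) ≤ Real.log (hnorm (c 0) v / N v) := by
    intro v hv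
    rw [← Real.log_inv,
      Real.log_le_log_iff (inv_pos.mpr hC₂pos) (div_pos (hH0pos v hv) (hNpos v hv)),
      le_div_iff₀ (hNpos v hv)]
    calc (∑ i, N (b i))⁻¹ * N v
        ≤ (∑ i, N (b i))⁻¹ * ((∑ i, N (b i)) * hnorm (c 0) v) :=
          mul_le_mul_of_nonneg_left (hN_le v) (inv_nonneg.mpr hC₂pos.le)
      _ = hnorm (c 0) v := by field_simp
  have hub0 : ∀ v : V, v ≠ 0 → Real.log (hnorm (c 0) v / N v) ≤ Real.log C₁ := by
    intro v hv
    rw [Real.log_le_log_iff (div_pos (hH0pos v hv) (hNpos v hv)) hC₁pos,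
      div_le_iff₀ (hNpos v hv)]
    exact hH0_le v
  set D := dInf N (hnorm (c 0)) with hD
  have hD0 : 0 ≤ D := aux_dInf_nonneg _ _
  have hfr1 : 1 ≤ Module.finrank ℂ V := by omega
  have h1mem : (1 : ℕ) ∈ Finset.Icc 1 (Module.finrank ℂ V) := by
    rw [Finset.mem_Icc]; omega
  have hnmem : Module.finrank ℂ V ∈ Finset.Icc 1 (Module.finrank ℂ V) := by
    rw [Finset.mem_Icc]; omega
  have hUBlog : ∀ v : V, v ≠ 0 → Real.log (hnorm (c 0) v / N v) ≤ D := by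
    intro v hv
    have h := aux_log_le_relSpec_one N (hnorm (c 0)) hlb0 hub0 hN.smul hH0.smul hv
    exact le_trans h (le_trans (le_abs_self _) (aux_abs_relSpec_le_dInf _ _ h1mem))
  have hLBlog : ∀ v : V, v ≠ 0 → -D ≤ Real.log (hnorm (c 0) v / N v) := by
    intro v hv
    have h := aux_relSpec_top_le N (hnorm (c 0)) hlb0 hv
    have h2 := (abs_le.mp (aux_abs_relSpec_le_dInf N (hnorm (c 0)) hnmem)).1
    linarith
  have hUB : ∀ v : V, v ≠ 0 → hnorm (c 0) v ≤ Real.exp D * N v := by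
    intro v hv
    have h := (Real.log_le_iff_le_exp (div_pos (hH0pos v hv) (hNpos v hv))).mp (hUBlog v hv)
    rwa [div_le_iff₀ (hNpos v hv)] at h
  have hLB : ∀ v : V, v ≠ 0 → N v ≤ Real.exp D * hnorm (c 0) v := by
    intro v hv
    have h := (Real.le_log_iff_exp_le (div_pos (hH0pos v hv) (hNpos v hv))).mp (hLBlog v hv)
    rw [le_div_iff₀ (hNpos v hv)] at h
    have h2 := mul_le_mul_of_nonneg_left h (Real.exp_pos D).le
    rw [← mul_assoc, ← Real.exp_add] at h2
    simpa using h2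
  -- estimate (a) : Hₜ ≤ e^D Nₜ
  have hA : ∀ g : V, hnorm (c t) g ≤ Real.exp D * (N g * filtChi F g ^ t) := by
    intro g
    by_cases hg : g = 0
    · subst hg
      rw [(hHt.eq_zero_iff 0).mpr rfl, (hN.eq_zero_iff 0).mpr rfl]
      simp
    · have hw : g ∈ F (filtWeight F g) := aux_filtWeight_mem hF hg
      have hvanish : ∀ i : Fin n, jumpNum F (i.1 + 1) < filtWeight F g → b.repr g i = 0 :=
        fun i hi => aux_repr_eq_zero hF b hmem hw hi
      have hsq : hnorm (c t) g ^ 2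
          ≤ (Real.exp (-(t * filtWeight F g)) * hnorm (c 0) g) ^ 2 := by
        rw [hHtsq g, mul_pow, hH0sq g, Finset.mul_sum]
        refine Finset.sum_le_sum fun i _ => ?_
        by_cases hri : b.repr g i = 0
        · simp [hri]
        · have hge : filtWeight F g ≤ jumpNum F (i.1 + 1) := by
            by_contra hcon
            push_neg at hcon
            exact hri (hvanish i hcon)
          rw [mul_pow, mul_comm (Real.exp (-(t * filtWeight F g)) ^ 2)]
          refine mul_le_mul_of_nonneg_left ?_ (sq_nonneg _)
          refine pow_le_pow_left₀ (Real.exp_pos _).le (Real.exp_le_exp.mpr ?_) 2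
          nlinarith
      have h2 := Real.sqrt_le_sqrt hsq
      rw [Real.sqrt_sq (aux_norm_nonneg hHt g), Real.sqrt_sq
        (mul_nonneg (Real.exp_pos _).le (aux_norm_nonneg hH0 g))] at h2
      refine le_trans h2 ?_
      rw [aux_chi_rpow hg t]
      have harg : -filtWeight F g * t = -(t * filtWeight F g) := by ring
      rw [harg]
      calc Real.exp (-(t * filtWeight F g)) * hnorm (c 0) g
          ≤ Real.exp (-(t * filtWeight F g)) * (Real.exp D * N g) :=
            mul_le_mul_of_nonneg_left (hUB g hg) (Real.exp_pos _).le
        _ = Real.exp D * (N g * Real.exp (-(t * filtWeight F g))) := by ring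
  have hA' : ∀ f : V, hnorm (c t) f ≤ Real.exp D * envRay F N t f := by
    intro f
    have hkey : Real.exp (-D) * hnorm (c t) f ≤ envRay F N t f := by
      refine le_csInf ⟨N f * filtChi F f ^ t, 1, fun _ => f, by simp, by simp⟩ ?_
      rintro r ⟨m, g, rfl, rfl⟩
      have h1 : hnorm (c t) (∑ i, g i) ≤ ∑ i, hnorm (c t) (g i) := aux_norm_sum_le hHt _ _
      have h2 : ∑ i, hnorm (c t) (g i)
          ≤ Real.exp D * ∑ i, N (g i) * filtChi F (g i) ^ t := by
        rw [Finset.mul_sum]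
        exact Finset.sum_le_sum fun i _ => hA (g i)
      have h3 := mul_le_mul_of_nonneg_left (le_trans h1 h2) (Real.exp_pos (-D)).le
      rw [← mul_assoc, ← Real.exp_add] at h3
      simpa using h3
    have h4 := mul_le_mul_of_nonneg_left hkey (Real.exp_pos D).le
    rw [← mul_assoc, ← Real.exp_add] at h4
    simpa using h4
  -- estimate (b) : Nₜ ≤ e^(D + log n) Hₜ
  have hB : ∀ v : V,
      envRay F N t v ≤ Real.exp (D + Real.log n) * hnorm (c t) v := by
    intro v
    have hdec : v = ∑ i, (b.repr v i) • b i := (b.sum_repr v).symm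
    have h1 := aux_env_le (F := F) hN t v (fun i => (b.repr v i) • b i) hdec
    have hterm : ∀ i : Fin n, N ((b.repr v i) • b i) * filtChi F ((b.repr v i) • b i) ^ t
        ≤ Real.exp D * (‖b.repr v i‖ * Real.exp (-(t * jumpNum F (i.1 + 1)))) := by
      intro i
      by_cases hri : b.repr v i = 0
      · simp [hri, (hN.eq_zero_iff 0).mpr rfl]
      · have hgi0 : (b.repr v i) • b i ≠ 0 := smul_ne_zero hri (hb0 i)
        have hH0bi : hnorm (c 0) (b i) = 1 := by
          show Real.sqrt (((c 0).inner (b i) (b i)).re) = 1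
          rw [hON i i, if_pos rfl]
          simp
        have hNbi : N (b i) ≤ Real.exp D := by
          have h := hLB (b i) (hb0 i)
          rwa [hH0bi, mul_one] at h
        have hchi : filtChi F ((b.repr v i) • b i) ^ t
            ≤ Real.exp (-(t * jumpNum F (i.1 + 1))) := by
          rw [aux_chi_rpow hgi0 t]
          apply Real.exp_le_exp.mpr
          have hmem' : (b.repr v i) • b i ∈ F (jumpNum F (i.1 + 1)) :=
            Submodule.smul_mem _ _ (hmem i)
          have hwge : jumpNum F (i.1 + 1) ≤ filtWeight F ((b.repr v i) • b i) :=
            (aux_le_filtWeight_iff hF hgi0).mp hmem'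
          nlinarith
        calc N ((b.repr v i) • b i) * filtChi F ((b.repr v i) • b i) ^ t
            = ‖b.repr v i‖ * N (b i) * filtChi F ((b.repr v i) • b i) ^ t := by
              rw [hN.smul]
          _ ≤ ‖b.repr v i‖ * Real.exp D
                * Real.exp (-(t * jumpNum F (i.1 + 1))) := by
              refine mul_le_mul ?_ hchi (Real.rpow_nonneg (aux_chi_nonneg F _) t) ?_
              · exact mul_le_mul_of_nonneg_left hNbi (norm_nonneg _)
              · exact mul_nonneg (norm_nonneg _) (Real.exp_pos _).le
          _ = Real.exp D
                * (‖b.repr v i‖ * Real.exp (-(t * jumpNum F (i.1 + 1)))) := by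
              ring
    have h2 : envRay F N t v ≤ Real.exp D *
        ∑ i, ‖b.repr v i‖ * Real.exp (-(t * jumpNum F (i.1 + 1))) := by
      refine le_trans h1 ?_
      rw [Finset.mul_sum]
      exact Finset.sum_le_sum fun i _ => hterm i
    have hxnn : ∀ i : Fin n,
        0 ≤ ‖b.repr v i‖ * Real.exp (-(t * jumpNum F (i.1 + 1))) :=
      fun i => mul_nonneg (norm_nonneg _) (Real.exp_pos _).le
    have hcs : ∑ i, ‖b.repr v i‖ * Real.exp (-(t * jumpNum F (i.1 + 1)))
        ≤ Real.sqrt n * hnorm (c t) v := by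
      have h3 : (∑ i, ‖b.repr v i‖ * Real.exp (-(t * jumpNum F (i.1 + 1)))) ^ 2
          ≤ (Finset.univ.card : ℝ) *
            ∑ i, (‖b.repr v i‖ * Real.exp (-(t * jumpNum F (i.1 + 1)))) ^ 2 :=
        sq_sum_le_card_mul_sum_sq
      rw [← hHtsq v, Finset.card_univ, Fintype.card_fin] at h3
      have h5 := Real.sqrt_le_sqrt h3
      rw [Real.sqrt_sq (Finset.sum_nonneg fun i _ => hxnn i),
        Real.sqrt_mul (by positivity : (0:ℝ) ≤ (n:ℝ)),
        Real.sqrt_sq (aux_norm_nonneg hHt v)] at h5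
      exact h5
    have hsn : Real.sqrt n ≤ Real.exp (Real.log n) := by
      rw [Real.exp_log (by exact_mod_cast hn : (0:ℝ) < (n:ℝ))]
      have h6 : Real.sqrt n ≤ Real.sqrt ((n:ℝ) ^ 2) := by
        refine Real.sqrt_le_sqrt ?_
        nlinarith [show (1:ℝ) ≤ (n:ℝ) from by exact_mod_cast hn]
      rwa [Real.sqrt_sq (by positivity : (0:ℝ) ≤ (n:ℝ))] at h6
    calc envRay F N t v
        ≤ Real.exp D * (Real.sqrt n * hnorm (c t) v) := by
          refine le_trans h2 ?_
          exact mul_le_mul_of_nonneg_left hcs (Real.exp_pos _).le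
      _ ≤ Real.exp (D + Real.log n) * hnorm (c t) v := by
          rw [Real.exp_add]
          have h7 : Real.sqrt n * hnorm (c t) v
              ≤ Real.exp (Real.log n) * hnorm (c t) v :=
            mul_le_mul_of_nonneg_right hsn (aux_norm_nonneg hHt v)
          calc Real.exp D * (Real.sqrt n * hnorm (c t) v)
              ≤ Real.exp D * (Real.exp (Real.log n) * hnorm (c t) v) :=
                mul_le_mul_of_nonneg_left h7 (Real.exp_pos _).le
            _ = Real.exp D * Real.exp (Real.log n) * hnorm (c t) v := by ring
  -- conclusion
  have hlogn : 0 ≤ Real.log n := Real.log_nonneg (by exact_mod_cast hn)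
  have hpt : ∀ v : V, v ≠ 0 →
      -(D + Real.log n) ≤ Real.log (hnorm (c t) v / envRay F N t v) ∧
      Real.log (hnorm (c t) v / envRay F N t v) ≤ D + Real.log n := by
    intro v hv
    have hNtv := hNtpos v hv
    have hHtv := hHtpos v hv
    have hrpos : 0 < hnorm (c t) v / envRay F N t v := div_pos hHtv hNtv
    constructor
    · rw [Real.le_log_iff_exp_le hrpos, le_div_iff₀ hNtv]
      have h := mul_le_mul_of_nonneg_left (hB v) (Real.exp_pos (-(D + Real.log n))).le
      rw [← mul_assoc, ← Real.exp_add] at h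
      have harg : -(D + Real.log (n : ℝ)) + (D + Real.log (n : ℝ)) = 0 := by ring
      rw [harg, Real.exp_zero, one_mul] at h
      exact h
    · rw [Real.log_le_iff_le_exp hrpos, div_le_iff₀ hNtv]
      refine le_trans (hA' v) ?_
      exact mul_le_mul_of_nonneg_right (Real.exp_le_exp.mpr (by linarith)) hNtv.le
  rw [hnV]
  refine aux_dInf_le _ _ (by linarith) ?_
  intro j hj
  rw [Finset.mem_Icc] at hj
  have hjn : j ≤ n := by omega
  have hbounds := aux_relSpec_bounds (envRay F N t) (hnorm (c t)) b hpt hj.1 hjn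
  exact abs_le.mpr ⟨by linarith [hbounds.1], hbounds.2⟩

end
end
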